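/- arXiv:2203.16658 — 8 statements merged into one kernel-verified Lean document; each statement's English description precedes it below -/
import Mathlib

section
/- Let p > 2 be prime and S ⊆ (ℤ_p × ℤ_2) \ {(0,0)} with |S| = 5 such that exactly 3 elements of S have second coordinate 0 and exactly 2 have second coordinate 1. Then S has a sequencing: an ordering whose partial sums y_0,...,y_5 are distinct, except possibly y_5 = y_0 = 0. -/
/-- An ordering (list) is a *linear sequencing* if its partial sums
`y_0 = 0, y_1, ..., y_k` are pairwise distinct. -/
def IsLinSeq {G : Type*} [AddCommGroup G] (l : List G) : Prop :=
  Function.Injective (fun i : Fin (l.length + 1) => (l.take i.val).sum)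

/-- An ordering (list) is a *rotational sequencing* if its partial sums
`y_0 = 0, y_1, ..., y_k` are pairwise distinct except for `y_k = y_0 = 0`. -/
def IsRotSeq {G : Type*} [AddCommGroup G] (l : List G) : Prop :=
  l ≠ [] ∧ l.sum = 0 ∧
    Function.Injective (fun i : Fin l.length => (l.take i.val).sum)

/-- A finite subset is *sequenceable* if some ordering of its elements is a
linear or a rotational sequencing. -/
def Sequenceable {G : Type*} [AddCommGroup G] (S : Finset G) : Prop :=
  ∃ l : List G, l.Nodup ∧ (∀ x, x ∈ l ↔ x ∈ S) ∧ (IsLinSeq l ∨ IsRotSeq l)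

/-- A finite subset `S ⊆ G × H` has *type* `lam` if for each `h : H` exactly
`lam h` elements of `S` have second coordinate `h`. -/
def HasType {G H : Type*} (S : Finset (G × H)) (lam : H → ℕ) : Prop :=
  ∀ h : H, ({x ∈ (S : Set (G × H)) | x.2 = h}).ncard = lam h


lemma isLinSeq_of {G : Type*} [AddCommGroup G] (x1 x2 x3 x4 x5 : G)
    (h : List.Nodup [0, x1, x1+x2, x1+x2+x3, x1+x2+x3+x4, x1+x2+x3+x4+x5]) :
    IsLinSeq [x1,x2,x3,x4,x5] := by
  unfold IsLinSeq
  have he : (fun i : Fin ([x1,x2,x3,x4,x5].length + 1) => (List.take i.val [x1,x2,x3,x4,x5]).sum)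
      = fun i => [0, x1, x1+x2, x1+x2+x3, x1+x2+x3+x4, x1+x2+x3+x4+x5].get
        (Fin.cast (by simp) i) := by
    funext i; fin_cases i <;> simp [add_assoc, show ((3:Fin 6):Nat)=3 from rfl, show ((4:Fin 6):Nat)=4 from rfl, show ((5:Fin 6):Nat)=5 from rfl]
  rw [he]
  exact (List.nodup_iff_injective_get.mp h).comp (Fin.cast_injective _)

lemma isRotSeq_of {G : Type*} [AddCommGroup G] (x1 x2 x3 x4 x5 : G)
    (hs : x1+x2+x3+x4+x5 = 0)
    (h : List.Nodup [0, x1, x1+x2, x1+x2+x3, x1+x2+x3+x4]) :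
    IsRotSeq [x1,x2,x3,x4,x5] := by
  refine ⟨by simp, by simpa [add_assoc] using hs, ?_⟩
  have he : (fun i : Fin ([x1,x2,x3,x4,x5].length) => (List.take i.val [x1,x2,x3,x4,x5]).sum)
      = fun i => [0, x1, x1+x2, x1+x2+x3, x1+x2+x3+x4].get
        (Fin.cast (by simp) i) := by
    funext i; fin_cases i <;> simp [add_assoc, show ((3:Fin 5):Nat)=3 from rfl, show ((4:Fin 5):Nat)=4 from rfl]
  rw [he]
  exact (List.nodup_iff_injective_get.mp h).comp (Fin.cast_injective _)

lemma tmpl1 (p : ℕ) (a b c d e : ZMod p)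
    (ha : a ≠ 0) (hb : b ≠ 0) (hc : c ≠ 0)
    (hab : a ≠ b) (hac : a ≠ c) (hbc : b ≠ c) (hde : d ≠ e)
    (S : Finset (ZMod p × ZMod 2))
    (hS : ∀ x, x ∈ S ↔ x = (a,0) ∨ x = (b,0) ∨ x = (c,0) ∨ x = (d,1) ∨ x = (e,1))
    (hcond : (a+b+c+d+e = 0 ∧ a + c ≠ 0) ∨
      (a+b+c+d+e ≠ 0 ∧ a ≠ a+b+c+d+e ∧ c ≠ a+b+c+d+e ∧ a+c ≠ a+b+c+d+e)) :
    Sequenceable S := by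
  have h11 : (1 : ZMod 2) + 1 = 0 := rfl
  refine ⟨[(a,0),(d,1),(b,0),(e,1),(c,0)], ?_, ?_, ?_⟩
  · simp [List.nodup_cons, Prod.ext_iff, hab, hac, hbc, hde]
  · intro x; rw [hS]; simp [List.mem_cons]; tauto
  · rcases hcond with ⟨hσ, hxz⟩ | ⟨hσ, h1, h2, h3⟩
    · right
      apply isRotSeq_of
      · simp [Prod.ext_iff, Prod.mk_add_mk, h11]
        linear_combination hσ
      · simp [List.nodup_cons, Prod.ext_iff, Prod.mk_add_mk, h11]
        repeat' apply And.intro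
        all_goals intro h
        all_goals first
        | exact ha (by linear_combination h) | exact ha (by linear_combination -h)
        | exact hb (by linear_combination h) | exact hb (by linear_combination -h)
        | exact hc (by linear_combination h) | exact hc (by linear_combination -h)
        | exact hc (by linear_combination h + hσ) | exact hc (by linear_combination -h + hσ)
        | exact hc (by linear_combination h - hσ) | exact hc (by linear_combination -h - hσ)
        | exact hxz (by linear_combination h + hσ) | exact hxz (by linear_combination -h + hσ)
        | exact hxz (by linear_combination h - hσ) | exact hxz (by linear_combination -h - hσ)
    · left
      apply isLinSeq_of
      simp [List.nodup_cons, Prod.ext_iff, Prod.mk_add_mk, h11]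
      repeat' apply And.intro
      all_goals intro h
      all_goals first
        | exact ha (by linear_combination h) | exact ha (by linear_combination -h)
        | exact hb (by linear_combination h) | exact hb (by linear_combination -h)
        | exact hc (by linear_combination h) | exact hc (by linear_combination -h)
        | exact hσ (by linear_combination h) | exact hσ (by linear_combination -h)
        | exact h1 (by linear_combination h) | exact h1 (by linear_combination -h)
        | exact h2 (by linear_combination h) | exact h2 (by linear_combination -h)
        | exact h3 (by linear_combination h) | exact h3 (by linear_combination -h)

lemma tmpl2 (p : ℕ) (a b c d e : ZMod p)
    (ha : a ≠ 0) (hb : b ≠ 0) (hc : c ≠ 0)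
    (hab : a ≠ b) (hac : a ≠ c) (hbc : b ≠ c) (hde : d ≠ e)
    (S : Finset (ZMod p × ZMod 2))
    (hS : ∀ x, x ∈ S ↔ x = (a,0) ∨ x = (b,0) ∨ x = (c,0) ∨ x = (d,1) ∨ x = (e,1))
    (hσ : a+b+c+d+e ≠ 0) (h1 : a + b ≠ 0) (h2 : b + c ≠ 0) (h3 : a + b + c ≠ 0) :
    Sequenceable S := by
  have h11 : (1 : ZMod 2) + 1 = 0 := rfl
  refine ⟨[(d,1),(a,0),(b,0),(c,0),(e,1)], ?_, ?_, ?_⟩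
  · simp [List.nodup_cons, Prod.ext_iff, hab, hac, hbc, hde]
  · intro x; rw [hS]; simp [List.mem_cons]; tauto
  · left
    apply isLinSeq_of
    simp [List.nodup_cons, Prod.ext_iff, Prod.mk_add_mk, h11]
    repeat' apply And.intro
    all_goals intro h
    all_goals first
    | exact ha (by linear_combination h) | exact ha (by linear_combination -h)
    | exact hb (by linear_combination h) | exact hb (by linear_combination -h)
    | exact hc (by linear_combination h) | exact hc (by linear_combination -h)
    | exact hσ (by linear_combination h) | exact hσ (by linear_combination -h)
    | exact h1 (by linear_combination h) | exact h1 (by linear_combination -h)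
    | exact h2 (by linear_combination h) | exact h2 (by linear_combination -h)
    | exact h3 (by linear_combination h) | exact h3 (by linear_combination -h)
-- appended to t3.lean content
lemma tmpl2' (p : ℕ) (a b c d e : ZMod p)
    (ha : a ≠ 0) (hb : b ≠ 0) (hc : c ≠ 0)
    (hab : a ≠ b) (hac : a ≠ c) (hbc : b ≠ c) (hde : d ≠ e)
    (S : Finset (ZMod p × ZMod 2))
    (hS : ∀ x, x ∈ S ↔ x = (a,0) ∨ x = (b,0) ∨ x = (c,0) ∨ x = (d,1) ∨ x = (e,1))
    (hσ : a+b+c+d+e ≠ 0) (h3 : a + b + c ≠ 0) :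
    Sequenceable S := by
  by_cases h1 : a + b = 0
  · -- a+c ≠ 0 (else b = c), b+c... use order (a, c, b)
    have hac0 : a + c ≠ 0 := fun h => hbc (by linear_combination h1 - h)
    have hcb0 : c + b ≠ 0 := fun h => hac (by linear_combination h1 - h)
    exact tmpl2 p a c b d e ha hc hb hac hab (Ne.symm hbc) hde S
      (fun x => by rw [hS x]; tauto)
      (fun h => hσ (by linear_combination h)) hac0 hcb0
      (fun h => h3 (by linear_combination h))
  · by_cases h2 : b + c = 0
    · -- use order (b, a, c): b+a ≠ 0, a+c ≠ 0 (else with b+c=0, a = b)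
      have hba0 : b + a ≠ 0 := fun h => h1 (by linear_combination h)
      have hac0 : a + c ≠ 0 := fun h => hab (by linear_combination h - h2)
      exact tmpl2 p b a c d e hb ha hc (Ne.symm hab) hbc hac hde S
        (fun x => by rw [hS x]; tauto)
        (fun h => hσ (by linear_combination h)) hba0 hac0
        (fun h => h3 (by linear_combination h))
    · exact tmpl2 p a b c d e ha hb hc hab hac hbc hde S hS hσ h1 h2 h3

lemma seq5 (p : ℕ) (h2p : (2 : ZMod p) ≠ 0) (hdom : ∀ x y : ZMod p, x ≠ 0 → y ≠ 0 → x * y ≠ 0)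
    (a b c d e : ZMod p)
    (ha : a ≠ 0) (hb : b ≠ 0) (hc : c ≠ 0)
    (hab : a ≠ b) (hac : a ≠ c) (hbc : b ≠ c) (hde : d ≠ e)
    (S : Finset (ZMod p × ZMod 2))
    (hS : ∀ x, x ∈ S ↔ x = (a,0) ∨ x = (b,0) ∨ x = (c,0) ∨ x = (d,1) ∨ x = (e,1)) :
    Sequenceable S := by
  set σ := a + b + c + d + e with hσdef
  by_cases hσ : σ = 0
  · by_cases h1 : a + c ≠ 0
    · exact tmpl1 p a b c d e ha hb hc hab hac hbc hde S hS (Or.inl ⟨hσ, h1⟩)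
    · push_neg at h1
      have h2 : a + b ≠ 0 := fun h => hbc (by linear_combination h - h1)
      exact tmpl1 p a c b d e ha hc hb hac hab (Ne.symm hbc) hde S
        (fun x => by rw [hS x]; tauto)
        (Or.inl ⟨by linear_combination hσ, h2⟩)
  · have h2σ : σ + σ ≠ 0 := by
      intro h; exact hdom 2 σ h2p hσ (by linear_combination h)
    by_cases hc' : c = σ
    · by_cases hX : a + b = σ
      · exact tmpl2' p a b c d e ha hb hc hab hac hbc hde S hS hσ
          (fun h => h2σ (by linear_combination h - hX - hc'))
      · -- tmpl1 with x=a, z=b, y=c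
        exact tmpl1 p a c b d e ha hc hb hac hab (Ne.symm hbc) hde S
          (fun x => by rw [hS x]; tauto)
          (Or.inr ⟨fun h => hσ (by linear_combination hσdef + h),
            fun h => hac (by linear_combination h - hc'),
            fun h => hbc (by linear_combination h - hc'),
            fun h => hX (by linear_combination h)⟩)
    · by_cases ha' : a = σ
      · by_cases hX : b + c = σ
        · exact tmpl2' p a b c d e ha hb hc hab hac hbc hde S hS hσ
            (fun h => h2σ (by linear_combination h - hX - ha'))
        · -- tmpl1 with x=b, y=a, z=c
          exact tmpl1 p b a c d e hb ha hc (Ne.symm hab) hbc hac hde S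
            (fun x => by rw [hS x]; tauto)
            (Or.inr ⟨fun h => hσ (by linear_combination hσdef + h),
              fun h => hab (by linear_combination ha' - h),
              fun h => hc' (by linear_combination h),
              fun h => hX (by linear_combination h)⟩)
      · by_cases hb' : b = σ
        · by_cases hX : a + c = σ
          · exact tmpl2' p a b c d e ha hb hc hab hac hbc hde S hS hσ
              (fun h => h2σ (by linear_combination h - hX - hb'))
          · exact tmpl1 p a b c d e ha hb hc hab hac hbc hde S hS
              (Or.inr ⟨hσ, ha', hc', hX⟩)
        · by_cases hX : a + b = σ
          · -- then a + c ≠ σ, use pair (a,c) mid b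
            have hY : a + c ≠ σ := fun h => hbc (by linear_combination hX - h)
            exact tmpl1 p a b c d e ha hb hc hab hac hbc hde S hS
              (Or.inr ⟨hσ, ha', hc', hY⟩)
          · -- use pair (a,b), mid c: tmpl1 x=a,y=c,z=b
            exact tmpl1 p a c b d e ha hc hb hac hab (Ne.symm hbc) hde S
              (fun x => by rw [hS x]; tauto)
              (Or.inr ⟨fun h => hσ (by linear_combination hσdef + h),
                fun h => ha' (by linear_combination h),
                fun h => hb' (by linear_combination h),
                fun h => hX (by linear_combination h)⟩)
/-- Subsets of size 5 and type (3,2) of (ℤ_p × ℤ_2) minus {(0,0)} are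
sequenceable for every odd prime p. -/
theorem stmt_2 (p : ℕ) (hp : p.Prime) (hp2 : 2 < p)
    (S : Finset (ZMod p × ZMod 2)) (h0 : ((0, 0) : ZMod p × ZMod 2) ∉ S)
    (hcard : S.card = 5)
    (h3 : ({x ∈ (S : Set (ZMod p × ZMod 2)) | x.2 = 0}).ncard = 3)
    (h2 : ({x ∈ (S : Set (ZMod p × ZMod 2)) | x.2 = 1}).ncard = 2) :
    Sequenceable S := by
  haveI : Fact p.Prime := ⟨hp⟩
  obtain ⟨x, y, z, hxy, hxz, hyz, hset0⟩ := Set.ncard_eq_three.mp h3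
  obtain ⟨u, v, huv, hset1⟩ := Set.ncard_eq_two.mp h2
  have hx : x ∈ S ∧ x.2 = 0 := by
    have : x ∈ ({x, y, z} : Set (ZMod p × ZMod 2)) := by simp
    rw [← hset0] at this; simpa using this
  have hy : y ∈ S ∧ y.2 = 0 := by
    have : y ∈ ({x, y, z} : Set (ZMod p × ZMod 2)) := by simp
    rw [← hset0] at this; simpa using this
  have hz : z ∈ S ∧ z.2 = 0 := by
    have : z ∈ ({x, y, z} : Set (ZMod p × ZMod 2)) := by simp
    rw [← hset0] at this; simpa using this
  have hu : u ∈ S ∧ u.2 = 1 := by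
    have : u ∈ ({u, v} : Set (ZMod p × ZMod 2)) := by simp
    rw [← hset1] at this; simpa using this
  have hv : v ∈ S ∧ v.2 = 1 := by
    have : v ∈ ({u, v} : Set (ZMod p × ZMod 2)) := by simp
    rw [← hset1] at this; simpa using this
  have hxe : x = (x.1, 0) := by rw [← hx.2]
  have hye : y = (y.1, 0) := by rw [← hy.2]
  have hze : z = (z.1, 0) := by rw [← hz.2]
  have hue : u = (u.1, 1) := by rw [← hu.2]
  have hve : v = (v.1, 1) := by rw [← hv.2]
  have h01 : ∀ w : ZMod 2, w = 0 ∨ w = 1 := by decide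
  have hS : ∀ t, t ∈ S ↔ t = (x.1,0) ∨ t = (y.1,0) ∨ t = (z.1,0) ∨ t = (u.1,1) ∨ t = (v.1,1) := by
    intro t
    constructor
    · intro ht
      rcases h01 t.2 with h | h
      · have : t ∈ ({x, y, z} : Set (ZMod p × ZMod 2)) := by
          rw [← hset0]; exact ⟨ht, h⟩
        rcases this with h' | h' | h'
        · exact Or.inl (h'.trans hxe)
        · exact Or.inr (Or.inl (h'.trans hye))
        · exact Or.inr (Or.inr (Or.inl (h'.trans hze)))
      · have : t ∈ ({u, v} : Set (ZMod p × ZMod 2)) := by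
          rw [← hset1]; exact ⟨ht, h⟩
        rcases this with h' | h'
        · exact Or.inr (Or.inr (Or.inr (Or.inl (h'.trans hue))))
        · exact Or.inr (Or.inr (Or.inr (Or.inr (h'.trans hve))))
    · rintro (h | h | h | h | h) <;> rw [h]
      · exact hxe ▸ hx.1
      · exact hye ▸ hy.1
      · exact hze ▸ hz.1
      · exact hue ▸ hu.1
      · exact hve ▸ hv.1
  have ha : x.1 ≠ 0 := by
    intro h; apply h0; have := hx.1; rw [hxe, h] at this; exact this
  have hb : y.1 ≠ 0 := by
    intro h; apply h0; have := hy.1; rw [hye, h] at this; exact this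
  have hc : z.1 ≠ 0 := by
    intro h; apply h0; have := hz.1; rw [hze, h] at this; exact this
  have hab : x.1 ≠ y.1 := by
    intro h; apply hxy; rw [hxe, hye, h]
  have hac : x.1 ≠ z.1 := by
    intro h; apply hxz; rw [hxe, hze, h]
  have hbc : y.1 ≠ z.1 := by
    intro h; apply hyz; rw [hye, hze, h]
  have hde : u.1 ≠ v.1 := by
    intro h; apply huv; rw [hue, hve, h]
  have h2p : (2 : ZMod p) ≠ 0 := by
    intro h
    have : ((2 : ℕ) : ZMod p) = 0 := by exact_mod_cast h
    rw [ZMod.natCast_eq_zero_iff] at this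
    have := Nat.le_of_dvd (by norm_num) this
    omega
  exact seq5 p h2p (fun x y hx hy => mul_ne_zero hx hy) x.1 y.1 z.1 u.1 v.1
    ha hb hc hab hac hbc hde S hS
end

section
/- Let p > 2 be prime. Every subset S of ℤ_{2p} \ {0} of size 5 containing exactly 3 even elements is sequenceable. -/
set_option maxHeartbeats 1600000 in
lemma aux_lin5 {R : Type*} [CommRing R] {a b c d e : R}
 (h1 : a ≠ 0) (h2 : a+b ≠ 0) (h3 : a+b+c ≠ 0) (h4 : a+b+c+d ≠ 0) (h5 : a+b+c+d+e ≠ 0)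
 (h6 : b ≠ 0) (h7 : b+c ≠ 0) (h8 : b+c+d ≠ 0) (h9 : b+c+d+e ≠ 0)
 (h10 : c ≠ 0) (h11 : c+d ≠ 0) (h12 : c+d+e ≠ 0)
 (h13 : d ≠ 0) (h14 : d+e ≠ 0) (h15 : e ≠ 0) :
 IsLinSeq [a,b,c,d,e] := by
  intro i j hij
  fin_cases i <;> fin_cases j <;>
    simp only [List.length_cons, List.length_nil, zero_add, Nat.reduceAdd, List.take_succ_cons, List.take_zero, List.take, List.sum_cons, List.sum_nil, add_zero] at hij <;>
    first
      | rfl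
      | (exfalso; first
          | exact h1 (by linear_combination hij) | exact h1 (by linear_combination -hij)
          | exact h2 (by linear_combination hij) | exact h2 (by linear_combination -hij)
          | exact h3 (by linear_combination hij) | exact h3 (by linear_combination -hij)
          | exact h4 (by linear_combination hij) | exact h4 (by linear_combination -hij)
          | exact h5 (by linear_combination hij) | exact h5 (by linear_combination -hij)
          | exact h6 (by linear_combination hij) | exact h6 (by linear_combination -hij)
          | exact h7 (by linear_combination hij) | exact h7 (by linear_combination -hij)
          | exact h8 (by linear_combination hij) | exact h8 (by linear_combination -hij)
          | exact h9 (by linear_combination hij) | exact h9 (by linear_combination -hij)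
          | exact h10 (by linear_combination hij) | exact h10 (by linear_combination -hij)
          | exact h11 (by linear_combination hij) | exact h11 (by linear_combination -hij)
          | exact h12 (by linear_combination hij) | exact h12 (by linear_combination -hij)
          | exact h13 (by linear_combination hij) | exact h13 (by linear_combination -hij)
          | exact h14 (by linear_combination hij) | exact h14 (by linear_combination -hij)
          | exact h15 (by linear_combination hij) | exact h15 (by linear_combination -hij))

set_option maxHeartbeats 1600000 in
lemma aux_rot5 {R : Type*} [CommRing R] {a b c d e : R}
 (hsum : a+b+c+d+e = 0)
 (h1 : a ≠ 0) (h2 : a+b ≠ 0) (h3 : a+b+c ≠ 0) (h4 : a+b+c+d ≠ 0)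
 (h6 : b ≠ 0) (h7 : b+c ≠ 0) (h8 : b+c+d ≠ 0)
 (h10 : c ≠ 0) (h11 : c+d ≠ 0)
 (h13 : d ≠ 0) :
 IsRotSeq [a,b,c,d,e] := by
  refine ⟨by simp, by simp only [List.sum_cons, List.sum_nil]; linear_combination hsum, ?_⟩
  intro i j hij
  fin_cases i <;> fin_cases j <;>
    simp only [List.length_cons, List.length_nil, zero_add, Nat.reduceAdd, List.take_succ_cons, List.take_zero, List.take, List.sum_cons, List.sum_nil, add_zero] at hij <;>
    first
      | rfl
      | (exfalso; first
          | exact h1 (by linear_combination hij) | exact h1 (by linear_combination -hij)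
          | exact h2 (by linear_combination hij) | exact h2 (by linear_combination -hij)
          | exact h3 (by linear_combination hij) | exact h3 (by linear_combination -hij)
          | exact h4 (by linear_combination hij) | exact h4 (by linear_combination -hij)
          | exact h6 (by linear_combination hij) | exact h6 (by linear_combination -hij)
          | exact h7 (by linear_combination hij) | exact h7 (by linear_combination -hij)
          | exact h8 (by linear_combination hij) | exact h8 (by linear_combination -hij)
          | exact h10 (by linear_combination hij) | exact h10 (by linear_combination -hij)
          | exact h11 (by linear_combination hij) | exact h11 (by linear_combination -hij)
          | exact h13 (by linear_combination hij) | exact h13 (by linear_combination -hij))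



lemma aux_odd_ne_zero {R : Type*} [CommRing R] (f : R →+* ZMod 2) {x : R}
    (hx : f x = 1) : x ≠ 0 := by
  intro h
  rw [h, map_zero] at hx
  exact one_ne_zero hx.symm

lemma aux_even_dvd (p : ℕ) (hp : p.Prime) (x : ZMod (2*p))
    (hx : ZMod.castHom (dvd_mul_right 2 p) (ZMod 2) x = 0) : 2 ∣ x.val := by
  haveI : NeZero (2*p) := ⟨by have := hp.pos; omega⟩
  rw [ZMod.castHom_apply, ← ZMod.natCast_val] at hx
  exact (ZMod.natCast_eq_zero_iff _ 2).mp hx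

lemma aux_even_iff (p : ℕ) (hp : p.Prime) (x : ZMod (2*p)) :
    (∃ y, x = y + y) ↔ ZMod.castHom (dvd_mul_right 2 p) (ZMod 2) x = 0 := by
  haveI : NeZero (2*p) := ⟨by have := hp.pos; omega⟩
  constructor
  · rintro ⟨y, rfl⟩
    rw [map_add]
    have : ∀ z : ZMod 2, z + z = 0 := by decide
    exact this _
  · intro h
    obtain ⟨m, hm⟩ := aux_even_dvd p hp x h
    refine ⟨(m : ZMod (2*p)), ?_⟩
    rw [← ZMod.natCast_zmod_val x, hm]
    push_cast
    ring

lemma aux_double_ne (p : ℕ) (hp : p.Prime) (hp2 : 2 < p) (x : ZMod (2*p))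
    (hx0 : x ≠ 0) (hx : ZMod.castHom (dvd_mul_right 2 p) (ZMod 2) x = 0) :
    x + x ≠ 0 := by
  intro h
  rcases (ZMod.neg_eq_self_iff x).mp (neg_eq_of_add_eq_zero_left h) with h1 | h2
  · exact hx0 h1
  · have hval := aux_even_dvd p hp x hx
    have : x.val = p := by omega
    rw [this] at hval
    have := (Nat.prime_dvd_prime_iff_eq Nat.prime_two hp).mp hval
    omega

lemma aux_nodup5 {G : Type*} {x1 x2 x3 x4 x5 : G}
    (h12 : x1 ≠ x2) (h13 : x1 ≠ x3) (h14 : x1 ≠ x4) (h15 : x1 ≠ x5)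
    (h23 : x2 ≠ x3) (h24 : x2 ≠ x4) (h25 : x2 ≠ x5)
    (h34 : x3 ≠ x4) (h35 : x3 ≠ x5) (h45 : x4 ≠ x5) :
    ([x1,x2,x3,x4,x5] : List G).Nodup := by
  simp [h12, h13, h14, h15, h23, h24, h25, h34, h35, h45]

lemma aux_mem5 {G : Type*} {x1 x2 x3 x4 x5 z : G} :
    z ∈ ([x1,x2,x3,x4,x5] : List G) ↔
      z = x1 ∨ z = x2 ∨ z = x3 ∨ z = x4 ∨ z = x5 := by
  simp


lemma aux_pattern1 {R : Type*} [CommRing R] (f : R →+* ZMod 2)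
    (e1 e2 e3 o1 o2 : R)
    (pe1 : f e1 = 0) (pe2 : f e2 = 0) (pe3 : f e3 = 0)
    (po1 : f o1 = 1) (po2 : f o2 = 1)
    (he1 : e1 ≠ 0) (he2 : e2 ≠ 0) (he3 : e3 ≠ 0)
    (h12 : e1 + e2 ≠ 0) (h23 : e2 + e3 ≠ 0) (hs : e1 + e2 + e3 ≠ 0) :
    IsLinSeq [o1,e1,e2,e3,o2] ∨ IsRotSeq [o1,e1,e2,e3,o2] := by
  have O : ∀ x : R, f x = 1 → x ≠ 0 := fun x hx => aux_odd_ne_zero f hx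
  by_cases hT : o1+e1+e2+e3+o2 = 0
  · right
    refine aux_rot5 hT (O _ po1) (O _ ?_) (O _ ?_) (O _ ?_) he1 h12 hs he2 h23 he3 <;>
      simp [map_add, pe1, pe2, pe3, po1, po2]
  · left
    refine aux_lin5 (O _ po1) (O _ ?_) (O _ ?_) (O _ ?_) hT he1 h12 hs (O _ ?_) he2 h23
      (O _ ?_) he3 (O _ ?_) (O _ po2) <;>
      simp [map_add, pe1, pe2, pe3, po1, po2]

lemma aux_pattern2 {R : Type*} [CommRing R] (f : R →+* ZMod 2)
    (e1 e2 e3 o1 o2 : R)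
    (pe1 : f e1 = 0) (pe2 : f e2 = 0) (pe3 : f e3 = 0)
    (po1 : f o1 = 1) (po2 : f o2 = 1)
    (he1 : e1 ≠ 0) (he2 : e2 ≠ 0) (he3 : e3 ≠ 0)
    (hs : e1 + e2 + e3 = 0)
    (hT1 : o1 + o2 ≠ e1) (hT3 : o1 + o2 ≠ e3) (hT2 : o1 + o2 + e2 ≠ 0) :
    IsLinSeq [e1,o1,e2,o2,e3] ∨ IsRotSeq [e1,o1,e2,o2,e3] := by
  have O : ∀ x : R, f x = 1 → x ≠ 0 := fun x hx => aux_odd_ne_zero f hx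
  by_cases hT : o1 + o2 = 0
  · right
    refine aux_rot5 (by linear_combination hs + hT) he1 (O _ ?_) (O _ ?_)
      (fun h => he3 (by linear_combination -h + hs + hT)) (O _ po1) (O _ ?_)
      (fun h => he2 (by linear_combination h - hT)) he2 (O _ ?_) (O _ po2) <;>
      simp [map_add, pe1, pe2, pe3, po1, po2]
  · left
    refine aux_lin5 he1 (O _ ?_) (O _ ?_)
      (fun h => hT3 (by linear_combination h - hs))
      (fun h => hT (by linear_combination h - hs))
      (O _ po1) (O _ ?_)
      (fun h => hT2 (by linear_combination h))
      (fun h => hT1 (by linear_combination h - hs))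
      he2 (O _ ?_) (O _ ?_) (O _ po2) (O _ ?_) he3 <;>
      simp [map_add, pe1, pe2, pe3, po1, po2]

set_option maxHeartbeats 1000000 in
lemma aux_key (p : ℕ) (hp : p.Prime) (hp2 : 2 < p)
    (a b c u v : ZMod (2*p))
    (hab : a ≠ b) (hac : a ≠ c) (hbc : b ≠ c) (huv : u ≠ v)
    (ha0 : a ≠ 0) (hb0 : b ≠ 0) (hc0 : c ≠ 0)
    (pa : ZMod.castHom (dvd_mul_right 2 p) (ZMod 2) a = 0)
    (pb : ZMod.castHom (dvd_mul_right 2 p) (ZMod 2) b = 0)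
    (pc : ZMod.castHom (dvd_mul_right 2 p) (ZMod 2) c = 0)
    (pu : ZMod.castHom (dvd_mul_right 2 p) (ZMod 2) u = 1)
    (pv : ZMod.castHom (dvd_mul_right 2 p) (ZMod 2) v = 1) :
    ∃ l : List (ZMod (2*p)), l.Nodup ∧
      (∀ x, x ∈ l ↔ x = a ∨ x = b ∨ x = c ∨ x = u ∨ x = v) ∧
      (IsLinSeq l ∨ IsRotSeq l) := by
  set f := ZMod.castHom (dvd_mul_right 2 p) (ZMod 2) with hf
  have ne_eo : ∀ x y : ZMod (2*p), f x = 0 → f y = 1 → x ≠ y := by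
    intro x y hx hy h; rw [h, hy] at hx; exact one_ne_zero hx
  have hau := ne_eo a u pa pu
  have hav := ne_eo a v pa pv
  have hbu := ne_eo b u pb pu
  have hbv := ne_eo b v pb pv
  have hcu := ne_eo c u pc pu
  have hcv := ne_eo c v pc pv
  by_cases hs : a + b + c = 0
  · -- evens sum to zero: pattern2
    by_cases hT0 : u + v = 0
    · exact ⟨[a,u,b,v,c],
        aux_nodup5 hau hab hav hac hbu.symm huv hcu.symm hbv hbc hcv.symm,
        fun x => by rw [aux_mem5]; tauto,
        aux_pattern2 f a b c u v pa pb pc pu pv ha0 hb0 hc0 hs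
          (fun h => ha0 (by linear_combination hT0 - h))
          (fun h => hc0 (by linear_combination hT0 - h))
          (fun h => hb0 (by linear_combination h - hT0))⟩
    · have hTT : (u+v) + (u+v) ≠ 0 :=
        aux_double_ne p hp hp2 (u+v) hT0 (by rw [map_add, pu, pv]; decide)
      by_cases hA : a = u + v
      · exact ⟨[b,u,a,v,c],
          aux_nodup5 hbu hab.symm hbv hbc hau.symm huv hcu.symm hav hac hcv.symm,
          fun x => by rw [aux_mem5]; tauto,
          aux_pattern2 f b a c u v pb pa pc pu pv hb0 ha0 hc0
            (by linear_combination hs)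
            (fun h => hab (hA.trans h)) (fun h => hac (hA.trans h))
            (fun h => hTT (by linear_combination h - hA))⟩
      · by_cases hB : b = u + v
        · exact ⟨[a,u,b,v,c],
            aux_nodup5 hau hab hav hac hbu.symm huv hcu.symm hbv hbc hcv.symm,
            fun x => by rw [aux_mem5]; tauto,
            aux_pattern2 f a b c u v pa pb pc pu pv ha0 hb0 hc0 hs
              (fun h => hA h.symm) (fun h => hbc (hB.trans h))
              (fun h => hTT (by linear_combination h - hB))⟩
        · by_cases hC : c = u + v
          · exact ⟨[a,u,c,v,b],
              aux_nodup5 hau hac hav hab hcu.symm huv hbu.symm hcv hbc.symm hbv.symm,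
              fun x => by rw [aux_mem5]; tauto,
              aux_pattern2 f a c b u v pa pc pb pu pv ha0 hc0 hb0
                (by linear_combination hs)
                (fun h => hA h.symm) (fun h => hB h.symm)
                (fun h => hTT (by linear_combination h - hC))⟩
          · by_cases hBm : u + v + b = 0
            · exact ⟨[a,u,c,v,b],
                aux_nodup5 hau hac hav hab hcu.symm huv hbu.symm hcv hbc.symm hbv.symm,
                fun x => by rw [aux_mem5]; tauto,
                aux_pattern2 f a c b u v pa pc pb pu pv ha0 hc0 hb0
                  (by linear_combination hs)
                  (fun h => hA h.symm) (fun h => hB h.symm)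
                  (fun h => hbc (by linear_combination hBm - h))⟩
            · exact ⟨[a,u,b,v,c],
                aux_nodup5 hau hab hav hac hbu.symm huv hcu.symm hbv hbc hcv.symm,
                fun x => by rw [aux_mem5]; tauto,
                aux_pattern2 f a b c u v pa pb pc pu pv ha0 hb0 hc0 hs
                  (fun h => hA h.symm) (fun h => hC h.symm) hBm⟩
  · -- evens sum nonzero: pattern1
    by_cases h1 : a + b = 0
    · exact ⟨[u,a,c,b,v],
        aux_nodup5 hau.symm hcu.symm hbu.symm huv hac hab hav hbc.symm hcv hbv,
        fun x => by rw [aux_mem5]; tauto,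
        aux_pattern1 f a c b u v pa pc pb pu pv ha0 hc0 hb0
          (fun h => hbc (by linear_combination h1 - h))
          (fun h => hac (by linear_combination h1 - h))
          (fun h => hs (by linear_combination h))⟩
    · by_cases h2 : a + c = 0
      · exact ⟨[u,a,b,c,v],
          aux_nodup5 hau.symm hbu.symm hcu.symm huv hab hac hav hbc hbv hcv,
          fun x => by rw [aux_mem5]; tauto,
          aux_pattern1 f a b c u v pa pb pc pu pv ha0 hb0 hc0 h1
            (fun h => hab (by linear_combination h2 - h)) hs⟩
      · exact ⟨[u,b,a,c,v],
          aux_nodup5 hbu.symm hau.symm hcu.symm huv hab.symm hbc hbv hac hav hcv,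
          fun x => by rw [aux_mem5]; tauto,
          aux_pattern1 f b a c u v pb pa pc pu pv hb0 ha0 hc0
            (fun h => h1 (by linear_combination h)) h2
            (fun h => hs (by linear_combination h))⟩

/-- Every subset of ℤ_{2p} minus {0} of size 5 with exactly 3 even elements is
sequenceable, for every odd prime p. -/
theorem stmt_3 (p : ℕ) (hp : p.Prime) (hp2 : 2 < p)
    (S : Finset (ZMod (2 * p))) (h0 : (0 : ZMod (2 * p)) ∉ S)
    (hcard : S.card = 5)
    (heven : ({x ∈ (S : Set (ZMod (2 * p))) | ∃ y, x = y + y}).ncard = 3) :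
    Sequenceable S := by
  classical
  set f := ZMod.castHom (dvd_mul_right 2 p) (ZMod 2) with hf
  set P : ZMod (2*p) → Prop := fun x => ∃ y, x = y + y with hP
  have hE : (S.filter P).card = 3 := by
    have h := heven
    rw [show {x ∈ (S : Set (ZMod (2 * p))) | ∃ y, x = y + y} = ↑(S.filter P) by
      rw [Finset.coe_filter]; rfl, Set.ncard_coe_finset] at h
    exact h
  have hO : (S.filter (fun x => ¬ P x)).card = 2 := by
    have := Finset.card_filter_add_card_filter_not (s := S) (p := P)
    omega
  obtain ⟨a, b, c, hab, hac, hbc, hEeq⟩ := Finset.card_eq_three.mp hE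
  obtain ⟨u, v, huv, hOeq⟩ := Finset.card_eq_two.mp hO
  have hamem : a ∈ S.filter P := by rw [hEeq]; simp
  have hbmem : b ∈ S.filter P := by rw [hEeq]; simp
  have hcmem : c ∈ S.filter P := by rw [hEeq]; simp
  have humem : u ∈ S.filter (fun x => ¬ P x) := by rw [hOeq]; simp
  have hvmem : v ∈ S.filter (fun x => ¬ P x) := by rw [hOeq]; simp
  rw [Finset.mem_filter] at hamem hbmem hcmem humem hvmem
  have hne0 : ∀ x, x ∈ S → x ≠ 0 := fun x hx h => h0 (h ▸ hx)
  have hone : ∀ z : ZMod 2, z ≠ 0 → z = 1 := by decide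
  obtain ⟨l, hnd, hmem, hseq⟩ := aux_key p hp hp2 a b c u v hab hac hbc huv
    (hne0 a hamem.1) (hne0 b hbmem.1) (hne0 c hcmem.1)
    ((aux_even_iff p hp a).mp hamem.2)
    ((aux_even_iff p hp b).mp hbmem.2)
    ((aux_even_iff p hp c).mp hcmem.2)
    (hone _ (fun h => humem.2 ((aux_even_iff p hp u).mpr h)))
    (hone _ (fun h => hvmem.2 ((aux_even_iff p hp v).mpr h)))
  refine ⟨l, hnd, fun x => (hmem x).trans ?_, hseq⟩
  constructor
  · rintro (rfl|rfl|rfl|rfl|rfl)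
    exacts [hamem.1, hbmem.1, hcmem.1, humem.1, hvmem.1]
  · intro hx
    by_cases hPx : P x
    · have : x ∈ S.filter P := Finset.mem_filter.mpr ⟨hx, hPx⟩
      rw [hEeq] at this
      simp only [Finset.mem_insert, Finset.mem_singleton] at this
      tauto
    · have : x ∈ S.filter (fun x => ¬ P x) := Finset.mem_filter.mpr ⟨hx, hPx⟩
      rw [hOeq] at this
      simp only [Finset.mem_insert, Finset.mem_singleton] at this
      tauto
end

section
/- The integers a = -18128730243333160 and b = -46383022877233608 have no common odd prime factor; hence for every odd prime p, at least one of a, b is nonzero modulo p. -/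
/-- The two coefficients have no common odd prime factor; hence for every odd
prime p at least one of them is nonzero modulo p. -/
theorem stmt_7 (p : ℕ) (hp : p.Prime) (hodd : Odd p) :
    (¬ ((p : ℤ) ∣ -18128730243333160 ∧ (p : ℤ) ∣ -46383022877233608)) ∧
    ((-18128730243333160 : ZMod p) ≠ 0 ∨ (-46383022877233608 : ZMod p) ≠ 0) := by
  have hnot : ¬ ((p : ℤ) ∣ -18128730243333160 ∧ (p : ℤ) ∣ -46383022877233608) := by
    rintro ⟨ha, hb⟩
    have h8 : (p : ℤ) ∣ (-8 : ℤ) := by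
      have : (-8 : ℤ) = (-18128730243333160) * (-2550449820213784) +
          (-46383022877233608) * 996839229564481 := by norm_num
      rw [this]
      exact dvd_add (ha.mul_right _) (hb.mul_right _)
    have hp8 : (p : ℤ) ∣ (8 : ℤ) := (dvd_neg.mp h8)
    have : p ∣ 8 := by exact_mod_cast hp8
    have hle := Nat.le_of_dvd (by norm_num) this
    interval_cases p <;> simp_all (config := {decide := true})
  refine ⟨hnot, ?_⟩
  by_contra h
  push_neg at h
  obtain ⟨h1, h2⟩ := h
  have h1' : ((-18128730243333160 : ℤ) : ZMod p) = 0 := by push_cast; exact_mod_cast h1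
  have h2' : ((-46383022877233608 : ℤ) : ZMod p) = 0 := by push_cast; exact_mod_cast h2
  exact hnot ⟨(ZMod.intCast_zmod_eq_zero_iff_dvd _ _).mp h1',
    (ZMod.intCast_zmod_eq_zero_iff_dvd _ _).mp h2'⟩
end

section
/- (Change of group lemma) Let G_1 and G_2 be abelian groups and let S ⊆ G_1 \ {0} be a finite subset with ΣS ≠ 0, of size k. Define Υ(S) = S ∪ Δ(S) ∪ {ΣS}, where Δ(S) = {a − b : a, b ∈ S, a ≠ b}. Suppose φ : G_1 → G_2 is a group homomorphism with ker(φ) ∩ Υ(S) = ∅. Then φ(S) is a subset of G_2 \ {0} of size k with Σφ(S) ≠ 0, and if φ(S) is sequenceable then S is sequenceable. -/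
/-- Change of group lemma: if a homomorphism φ has kernel disjoint from
Υ(S) = S ∪ Δ(S) ∪ {ΣS}, then φ(S) avoids 0, has the same size, has nonzero
sum, and sequenceability of φ(S) implies that of S. -/
theorem stmt_8 {G₁ G₂ : Type*} [AddCommGroup G₁] [AddCommGroup G₂]
    [DecidableEq G₂]
    (S : Finset G₁) (h0 : (0 : G₁) ∉ S) (hsum : (∑ x ∈ S, x) ≠ 0)
    (φ : G₁ →+ G₂)
    (hker : ∀ x : G₁,
      (x ∈ S ∨ (∃ a ∈ S, ∃ b ∈ S, a ≠ b ∧ x = a - b) ∨ x = ∑ y ∈ S, y) →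
      φ x ≠ 0) :
    (0 : G₂) ∉ S.image φ ∧ (S.image φ).card = S.card ∧
      (∑ y ∈ S.image φ, y) ≠ 0 ∧
      (Sequenceable (S.image φ) → Sequenceable S) := by
  classical
  have hinj : Set.InjOn φ S := by
    intro a ha b hb hab
    by_contra hne
    exact hker (a - b) (Or.inr (Or.inl ⟨a, ha, b, hb, hne, rfl⟩))
      (by simp [map_sub, hab])
  have hsum_img : (∑ y ∈ S.image φ, y) = φ (∑ x ∈ S, x) := by
    rw [Finset.sum_image (fun a ha b hb => hinj ha hb), map_sum]
  refine ⟨?_, ?_, ?_, ?_⟩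
  · intro h
    obtain ⟨x, hx, hx0⟩ := Finset.mem_image.mp h
    exact hker x (Or.inl hx) hx0
  · exact Finset.card_image_of_injOn hinj
  · rw [hsum_img]; exact hker _ (Or.inr (Or.inr rfl))
  · rintro ⟨l', hnd', hmem', hseq'⟩
    have himg : ∀ y ∈ l', y ∈ φ '' (S : Set G₁) := by
      intro y hy
      obtain ⟨x, hx, hxy⟩ := Finset.mem_image.mp ((hmem' y).mp hy)
      exact ⟨x, hx, hxy⟩
    set f : G₂ → G₁ := Function.invFunOn φ S with hf
    have hfS : ∀ y ∈ l', f y ∈ S := fun y hy =>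
      Function.invFunOn_mem (himg y hy)
    have hφf : ∀ y ∈ l', φ (f y) = y := fun y hy =>
      Function.invFunOn_eq (himg y hy)
    set l : List G₁ := l'.map f with hl
    have hmapφ : l.map φ = l' := by
      rw [hl, List.map_map]
      exact List.map_congr_left hφf |>.trans (List.map_id l')
    have hlen : l'.length = l.length := by
      rw [← hmapφ, List.length_map]
    have hnd : l.Nodup := by
      refine List.Nodup.map_on ?_ hnd'
      intro x hx y hy hxy
      rw [← hφf x hx, ← hφf y hy, hxy]
    have hmem : ∀ x, x ∈ l ↔ x ∈ S := by
      intro x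
      constructor
      · intro hx
        obtain ⟨y, hy, rfl⟩ := List.mem_map.mp hx
        exact hfS y hy
      · intro hx
        have hφx : φ x ∈ l' := (hmem' (φ x)).mpr (Finset.mem_image_of_mem φ hx)
        have : f (φ x) = x := hinj (hfS _ hφx) hx (hφf _ hφx)
        exact List.mem_map.mpr ⟨φ x, hφx, this⟩
    have htake : ∀ i : ℕ, (l'.take i).sum = φ ((l.take i).sum) := by
      intro i
      rw [← hmapφ, ← List.map_take, ← map_list_sum]
    rcases hseq' with hlin | hrot
    · refine ⟨l, hnd, hmem, Or.inl ?_⟩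
      intro i j hij
      have : (l'.take i.val).sum = (l'.take j.val).sum := by
        rw [htake, htake]; exact congrArg φ hij
      have h2 := hlin (a₁ := ⟨i.val, by omega⟩) (a₂ := ⟨j.val, by omega⟩) this
      exact Fin.ext (by simpa using h2)
    · exfalso
      have hfin : S.image φ = l'.toFinset := by
        ext y; simp [List.mem_toFinset, ← hmem' y]
      have : l'.sum = ∑ y ∈ S.image φ, y := by
        rw [hfin, show (∑ y ∈ l'.toFinset, y) = (l'.map id).sum from
          List.sum_toFinset _ hnd', List.map_id]
      have h0' : φ (∑ x ∈ S, x) = 0 := by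
        rw [← hsum_img, ← this]; exact hrot.2.1
      exact hker _ (Or.inr (Or.inr rfl)) h0'
end

section
/- Let H be a finite abelian group with elements h_0 = 0, h_1, ..., h_{t−1}, and fix a type λ = (λ_0,...,λ_{t−1}). Suppose that for infinitely many primes p, every non-zero-sum subset of (ℤ_p × H) \ {0} of type λ is sequenceable. Then every non-zero-sum subset of (ℤ × H) \ {0} of type λ is sequenceable. -/
/-- If for infinitely many primes p every non-zero-sum subset of
(ℤ_p × H) minus {0} of type lam is sequenceable, then so is every
non-zero-sum subset of (ℤ × H) minus {0} of type lam. -/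
theorem stmt_9 (H : Type*) [AddCommGroup H] [Fintype H] (lam : H → ℕ)
    (hyp : {p : ℕ | p.Prime ∧ ∀ S : Finset (ZMod p × H),
      (0 : ZMod p × H) ∉ S → HasType S lam → (∑ x ∈ S, x) ≠ 0 →
      Sequenceable S}.Infinite) :
    ∀ S : Finset (ℤ × H), (0 : ℤ × H) ∉ S → HasType S lam →
      (∑ x ∈ S, x) ≠ 0 → Sequenceable S := by
  intro S hS0 hStype hSsum
  classical
  -- a bound on first coordinates
  set B : ℤ := ∑ x ∈ S, |x.1| with hB
  have hBnonneg : 0 ≤ B := Finset.sum_nonneg fun x _ => abs_nonneg _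
  have hmemB : ∀ x ∈ S, |x.1| ≤ B := fun x hx =>
    Finset.single_le_sum (fun y _ => abs_nonneg y.1) hx
  have hsumB : |(∑ x ∈ S, x).1| ≤ B := by
    have h1 : (∑ x ∈ S, x).1 = ∑ x ∈ S, x.1 := map_sum (AddMonoidHom.fst ℤ H) _ S
    rw [h1]
    exact Finset.abs_sum_le_sum_abs _ _
  -- choose a large prime p from the hypothesis set
  obtain ⟨p, hp, hplarge⟩ := hyp.exists_gt (2 * B).toNat
  obtain ⟨hpprime, hpseq⟩ := hp
  have hplarge' : 2 * B < (p : ℤ) := by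
    calc (2 * B : ℤ) ≤ ((2 * B).toNat : ℤ) := Int.self_le_toNat _
    _ < (p : ℤ) := by exact_mod_cast hplarge
  -- the reduction homomorphism
  set f : ℤ × H →+ ZMod p × H :=
    (Int.castAddHom (ZMod p)).prodMap (AddMonoidHom.id H) with hf
  have hfapp : ∀ x : ℤ × H, f x = ((x.1 : ZMod p), x.2) := fun x => rfl
  -- the key arithmetic fact
  have key : ∀ a b : ℤ, |a| ≤ B → |b| ≤ B → ((a : ZMod p) = (b : ZMod p)) → a = b := by
    intro a b ha hb hab
    by_contra hne
    have hdvd : (p : ℤ) ∣ a - b := by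
      rw [← ZMod.intCast_zmod_eq_zero_iff_dvd]
      push_cast
      rw [hab]; ring
    have h1 : (p : ℤ) ≤ |a - b| := Int.le_of_dvd (abs_pos.mpr (sub_ne_zero.mpr hne))
      (dvd_abs .. |>.mpr hdvd)
    have h2 : |a - b| ≤ 2 * B := by
      calc |a - b| ≤ |a| + |b| := abs_sub _ _
      _ ≤ 2 * B := by linarith
    linarith
  -- f is injective on S ∪ {0, sum}
  have hfinj : ∀ x ∈ S, ∀ y ∈ S, f x = f y → x = y := by
    intro x hx y hy hxy
    rw [hfapp, hfapp, Prod.mk.injEq] at hxy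
    exact Prod.ext (key _ _ (hmemB x hx) (hmemB y hy) hxy.1) hxy.2
  have hfinjOn : Set.InjOn f ↑S := fun x hx y hy => hfinj x hx y hy
  have hfne0 : ∀ x ∈ S, f x ≠ 0 := by
    intro x hx h0
    rw [hfapp, Prod.mk.injEq] at h0
    have : x.1 = 0 := key _ _ (hmemB x hx) (by simpa using hBnonneg) (by simpa using h0.1)
    exact hS0 (by rwa [show x = 0 from Prod.ext this h0.2] at hx)
  have hfsumne : f (∑ x ∈ S, x) ≠ 0 := by
    intro h0
    rw [hfapp, Prod.mk.injEq] at h0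
    have h1 : (∑ x ∈ S, x).1 = 0 :=
      key _ _ hsumB (by simpa using hBnonneg) (by simpa using h0.1)
    exact hSsum (Prod.ext h1 h0.2)
  -- the image set
  set T : Finset (ZMod p × H) := S.image f with hT
  have hT0 : (0 : ZMod p × H) ∉ T := by
    intro h
    obtain ⟨x, hx, hfx⟩ := Finset.mem_image.mp h
    exact hfne0 x hx hfx
  have hTsum : (∑ y ∈ T, y) = f (∑ x ∈ S, x) := by
    rw [hT, Finset.sum_image hfinj, map_sum]
  have hTtype : HasType T lam := by
    intro h
    have hset : {y ∈ (T : Set (ZMod p × H)) | y.2 = h} = f '' {x ∈ (S : Set (ℤ × H)) | x.2 = h} := by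
      ext y
      simp only [Set.mem_setOf_eq, Set.mem_image, hT, Finset.coe_image, Set.mem_image,
        Finset.mem_coe]
      constructor
      · rintro ⟨⟨x, hx, rfl⟩, hy2⟩
        exact ⟨x, ⟨hx, by rwa [hfapp] at hy2⟩, rfl⟩
      · rintro ⟨x, ⟨hx, hx2⟩, rfl⟩
        exact ⟨⟨x, hx, rfl⟩, by rw [hfapp]; exact hx2⟩
    rw [hset, Set.ncard_image_of_injOn (hfinjOn.mono (fun x hx => hx.1))]
    exact hStype h
  -- apply the hypothesis
  obtain ⟨l', hl'nd, hl'mem, hl'seq⟩ := hpseq T hT0 hTtype (hTsum ▸ hfsumne)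
  -- pull back the list
  set g : ZMod p × H → ℤ × H := Function.invFunOn f ↑S with hg
  set l : List (ℤ × H) := l'.map g with hl
  have hl'T : ∀ y ∈ l', y ∈ f '' ↑S := by
    intro y hy
    obtain ⟨x, hx, hfx⟩ := Finset.mem_image.mp ((hl'mem y).mp hy)
    exact ⟨x, hx, hfx⟩
  have hmap : l.map f = l' := by
    rw [hl, List.map_map]
    refine List.map_congr_left (fun y hy => ?_) |>.trans (List.map_id l')
    exact Function.invFunOn_eq (by obtain ⟨x, hx, hfx⟩ := hl'T y hy; exact ⟨x, hx, hfx⟩)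
  have hgl : ∀ x ∈ S, g (f x) = x := fun x hx => hfinjOn.leftInvOn_invFunOn hx
  have hlmem : ∀ x, x ∈ l ↔ x ∈ S := by
    intro x
    constructor
    · intro hx
      rw [hl] at hx
      obtain ⟨y, hy, rfl⟩ := List.mem_map.mp hx
      obtain ⟨z, hz, rfl⟩ := hl'T y hy
      rw [hgl z hz]; exact hz
    · intro hx
      rw [hl, List.mem_map]
      exact ⟨f x, (hl'mem (f x)).mpr (Finset.mem_image_of_mem f hx), hgl x hx⟩
  have hlnd : l.Nodup := by
    rw [hl]
    refine (List.nodup_map_iff_inj_on hl'nd).mpr ?_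
    intro y hy z hz hgyz
    have : f (g y) = f (g z) := by rw [hgyz]
    rwa [Function.invFunOn_eq (hl'T y hy), Function.invFunOn_eq (hl'T z hz)] at this
  have hlsum : l.sum = ∑ x ∈ S, x := by
    have hSfin : S = l.toFinset := by
      ext x; rw [List.mem_toFinset, hlmem]
    rw [hSfin, List.sum_toFinset _ hlnd]
    simp
  have hlen : l'.length = l.length := by rw [← hmap, List.length_map]
  have hsums : ∀ i : ℕ, (l'.take i).sum = f ((l.take i).sum) := by
    intro i
    rw [← hmap, ← List.map_take, ← map_list_sum]
  -- rule out the rotational case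
  rcases hl'seq with hlin | hrot
  · refine ⟨l, hlnd, hlmem, Or.inl ?_⟩
    intro i j hij
    have : (fun i : Fin (l'.length + 1) => (l'.take i.val).sum) ⟨i, by omega⟩
        = (fun i : Fin (l'.length + 1) => (l'.take i.val).sum) ⟨j, by omega⟩ := by
      simp only [hsums]
      exact congrArg f hij
    have := hlin this
    exact Fin.ext (by simpa using congrArg Fin.val this)
  · exfalso
    have : l'.sum = 0 := hrot.2.1
    rw [← hmap, ← map_list_sum, hlsum] at this
    exact hfsumne this
end

section
/- Let H be a finite abelian group, n ≥ 2, and λ a type. If every non-zero-sum subset of (ℤ × H) \ {0} of type λ is sequenceable, then every non-zero-sum subset of (ℤ^n × H) \ {0} of type λ is sequenceable. -/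
lemma digits_zero : ∀ (m : ℕ) (M : ℤ) (d : Fin m → ℤ), (∀ i, |d i| < M) →
    (∑ i, d i * M ^ (i : ℕ)) = 0 → d = 0 := by
  intro m
  induction m with
  | zero => intro M d _ _; funext i; exact i.elim0
  | succ k ih =>
    intro M d hd hsum
    have hM : 0 < M := lt_of_le_of_lt (abs_nonneg (d 0)) (hd 0)
    rw [Fin.sum_univ_succ] at hsum
    have hrw : ∑ i : Fin k, d i.succ * M ^ ((i.succ : Fin (k+1)) : ℕ)
        = M * ∑ i : Fin k, d i.succ * M ^ (i : ℕ) := by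
      rw [Finset.mul_sum]
      refine Finset.sum_congr rfl fun i _ => ?_
      have : ((i.succ : Fin (k+1)) : ℕ) = (i : ℕ) + 1 := rfl
      rw [this, pow_succ]; ring
    rw [hrw] at hsum
    simp only [Fin.val_zero, pow_zero, mul_one] at hsum
    have hc : d 0 = M * (-(∑ i : Fin k, d i.succ * M ^ (i : ℕ))) := by linarith
    set c : ℤ := -(∑ i : Fin k, d i.succ * M ^ (i : ℕ)) with hcdef
    have hd0 : d 0 = 0 := by
      by_contra h
      have hc0 : c ≠ 0 := fun h0 => h (by rw [hc, h0, mul_zero])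
      have h1 : (1 : ℤ) ≤ |c| := Int.one_le_abs hc0
      have h2 : |d 0| < M := hd 0
      rw [hc, abs_mul, abs_of_pos hM] at h2
      nlinarith
    have hcz : c = 0 := by
      have : M * c = 0 := by rw [← hc, hd0]
      rcases mul_eq_zero.mp this with h | h
      · exact absurd h hM.ne'
      · exact h
    have hrest : (∑ i : Fin k, d i.succ * M ^ (i : ℕ)) = 0 := by
      have := hcz; rw [hcdef] at this; linarith
    have := ih M (fun i => d i.succ) (fun i => hd i.succ) hrest
    funext i
    refine Fin.cases ?_ ?_ i
    · exact hd0
    · intro j; exact congrFun this j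

/-- If every non-zero-sum subset of (ℤ × H) minus {0} of type lam is
sequenceable then, for every n ≥ 2, so is every non-zero-sum subset of
(ℤ^n × H) minus {0} of type lam. -/
theorem stmt_10 (H : Type*) [AddCommGroup H] [Fintype H] (lam : H → ℕ)
    (hyp : ∀ S : Finset (ℤ × H), (0 : ℤ × H) ∉ S → HasType S lam →
      (∑ x ∈ S, x) ≠ 0 → Sequenceable S)
    (n : ℕ) (hn : 2 ≤ n) :
    ∀ S : Finset ((Fin n → ℤ) × H), (0 : (Fin n → ℤ) × H) ∉ S →
      HasType S lam → (∑ x ∈ S, x) ≠ 0 → Sequenceable S := by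
  intro S hS0 hStype hSsum
  classical
  set B : ℤ := 1 + ∑ x ∈ S, ∑ i, |x.1 i| with hBdef
  have hsnn : (0:ℤ) ≤ ∑ x ∈ S, ∑ i, |x.1 i| :=
    Finset.sum_nonneg fun x _ => Finset.sum_nonneg fun i _ => abs_nonneg _
  have hBpos : 1 ≤ B := by rw [hBdef]; linarith
  have hbound : ∀ x ∈ S, ∀ i, |x.1 i| < B := by
    intro x hx i
    have h1 : |x.1 i| ≤ ∑ j, |x.1 j| :=
      Finset.single_le_sum (f := fun j => |x.1 j|) (fun j _ => abs_nonneg _) (Finset.mem_univ i)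
    have h2 : ∑ j, |x.1 j| ≤ ∑ y ∈ S, ∑ j, |y.1 j| :=
      Finset.single_le_sum (f := fun y => ∑ j, |y.1 j|)
        (fun y _ => Finset.sum_nonneg fun j _ => abs_nonneg _) hx
    rw [hBdef]; linarith
  have hsumbound : ∀ i, |(∑ x ∈ S, x).1 i| < B := by
    intro i
    have h1 : (∑ x ∈ S, x).1 i = ∑ x ∈ S, x.1 i := by
      rw [Prod.fst_sum, Finset.sum_apply]
    have h2 : |∑ x ∈ S, x.1 i| ≤ ∑ x ∈ S, |x.1 i| := Finset.abs_sum_le_sum_abs _ _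
    have h3 : ∑ x ∈ S, |x.1 i| ≤ ∑ x ∈ S, ∑ j, |x.1 j| :=
      Finset.sum_le_sum fun x _ =>
        Finset.single_le_sum (f := fun j => |x.1 j|) (fun j _ => abs_nonneg _) (Finset.mem_univ i)
    rw [h1, hBdef]; linarith
  -- the base-M homomorphism
  set M : ℤ := 2 * B with hMdef
  let ψ : (Fin n → ℤ) →+ ℤ :=
    { toFun := fun z => ∑ i, z i * M ^ (i : ℕ)
      map_zero' := by simp
      map_add' := fun x y => by
        simp only [Pi.add_apply, add_mul, Finset.sum_add_distrib] }
  have hinj : ∀ z z' : Fin n → ℤ, (∀ i, |z i| < B) → (∀ i, |z' i| < B) →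
      ψ z = ψ z' → z = z' := by
    intro z z' h1 h2 hψ
    have hd : ∀ i, |(z - z') i| < M := by
      intro i
      have := abs_sub (z i) (z' i)
      have h1i := h1 i; have h2i := h2 i
      simp only [Pi.sub_apply]
      rw [hMdef]; linarith
    have hsum0 : (∑ i, (z - z') i * M ^ (i : ℕ)) = 0 := by
      have : ψ (z - z') = 0 := by rw [map_sub, hψ, sub_self]
      exact this
    have := digits_zero n M (z - z') hd hsum0
    exact sub_eq_zero.mp this
  let φ : ((Fin n → ℤ) × H) →+ (ℤ × H) := ψ.prodMap (AddMonoidHom.id H)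
  have hφ1 : ∀ x : (Fin n → ℤ) × H, (φ x).1 = ψ x.1 := fun x => rfl
  have hφ2 : ∀ x : (Fin n → ℤ) × H, (φ x).2 = x.2 := fun x => rfl
  have hzb : ∀ i : Fin n, |(0 : Fin n → ℤ) i| < B := by
    intro i; simp only [Pi.zero_apply, abs_zero]; linarith
  have hinjS : Set.InjOn φ (S : Set _) := by
    intro x hx y hy hxy
    have h2 : x.2 = y.2 := by
      have := congrArg Prod.snd hxy; simpa [hφ2] using this
    have h1 : x.1 = y.1 := by
      have := congrArg Prod.fst hxy
      exact hinj x.1 y.1 (hbound x hx) (hbound y hy) this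
    exact Prod.ext h1 h2
  set T : Finset (ℤ × H) := S.image φ with hTdef
  have h0T : (0 : ℤ × H) ∉ T := by
    intro h0
    rcases Finset.mem_image.mp h0 with ⟨x, hx, hφx⟩
    have h2 : x.2 = 0 := by have := congrArg Prod.snd hφx; simpa [hφ2] using this
    have h1 : ψ x.1 = 0 := by have := congrArg Prod.fst hφx; simpa [hφ1] using this
    have hx1 : x.1 = 0 := hinj x.1 0 (hbound x hx) hzb (by rw [h1, map_zero])
    have hx0 : x = 0 := by rw [Prod.ext_iff]; exact ⟨hx1, h2⟩
    exact hS0 (hx0 ▸ hx)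
  have htypeT : HasType T lam := by
    intro h
    have himg : {y ∈ (T : Set (ℤ × H)) | y.2 = h}
        = φ '' {x ∈ (S : Set ((Fin n → ℤ) × H)) | x.2 = h} := by
      ext y
      constructor
      · rintro ⟨hyT, hy2⟩
        rcases Finset.mem_image.mp (Finset.mem_coe.mp hyT) with ⟨x, hx, rfl⟩
        exact ⟨x, ⟨hx, by rw [← hφ2 x]; exact hy2⟩, rfl⟩
      · rintro ⟨x, ⟨hx, hx2⟩, rfl⟩
        exact ⟨Finset.mem_coe.mpr (Finset.mem_image_of_mem φ hx), by rw [hφ2]; exact hx2⟩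
    rw [himg, Set.ncard_image_of_injOn (hinjS.mono fun x hx => hx.1)]
    exact hStype h
  have hsumT : ∑ y ∈ T, y = φ (∑ x ∈ S, x) := by
    rw [hTdef, Finset.sum_image (fun x hx y hy => hinjS hx hy), map_sum]
  have hTne : (∑ y ∈ T, y) ≠ 0 := by
    rw [hsumT]
    intro h0
    have h2 : (∑ x ∈ S, x).2 = 0 := by
      have := congrArg Prod.snd h0; simpa only [hφ2, Prod.snd_zero] using this
    have h1 : ψ (∑ x ∈ S, x).1 = 0 := by
      have := congrArg Prod.fst h0; simpa only [hφ1, Prod.fst_zero] using this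
    have hx1 : (∑ x ∈ S, x).1 = 0 := hinj _ 0 hsumbound hzb (by rw [h1, map_zero])
    exact hSsum (by rw [Prod.ext_iff]; exact ⟨hx1, h2⟩)
  obtain ⟨l, hlnd, hlmem, hlseq⟩ := hyp T h0T htypeT hTne
  set g : (ℤ × H) → ((Fin n → ℤ) × H) := Function.invFunOn φ (S : Set _) with hgdef
  have hginv : ∀ y ∈ T, φ (g y) = y ∧ g y ∈ S := by
    intro y hy
    rcases Finset.mem_image.mp hy with ⟨x, hx, rfl⟩
    exact ⟨Function.invFunOn_eq ⟨x, hx, rfl⟩,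
      Function.invFunOn_mem (f := φ) ⟨x, hx, rfl⟩⟩
  have hgx : ∀ x ∈ S, g (φ x) = x := by
    intro x hx
    have hy : φ x ∈ T := Finset.mem_image_of_mem φ hx
    exact hinjS ((hginv _ hy).2) hx ((hginv _ hy).1)
  refine ⟨l.map g, ?_, ?_, ?_⟩
  · refine List.Nodup.map_on ?_ hlnd
    intro y hy y' hy' hgy
    have h1 := (hginv y ((hlmem y).mp hy)).1
    have h2 := (hginv y' ((hlmem y').mp hy')).1
    rw [← h1, ← h2, hgy]
  · intro x
    constructor
    · intro hx
      rcases List.mem_map.mp hx with ⟨y, hy, rfl⟩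
      exact (hginv y ((hlmem y).mp hy)).2
    · intro hx
      have : φ x ∈ l := (hlmem _).mpr (Finset.mem_image_of_mem φ hx)
      rw [← hgx x hx]
      exact List.mem_map_of_mem (f := g) this
  · have key : ∀ m : ℕ, φ (((l.map g).take m).sum) = (l.take m).sum := by
      intro m
      rw [← List.map_take, map_list_sum, List.map_map]
      congr 1
      conv_rhs => rw [← List.map_id (l.take m)]
      refine List.map_congr_left fun y hy => ?_
      exact (hginv y ((hlmem y).mp (List.mem_of_mem_take hy))).1
    have hlen : (l.map g).length = l.length := List.length_map _
    rcases hlseq with hL | hR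
    · left
      intro i j hij
      have h1 : φ (((l.map g).take i.1).sum) = φ (((l.map g).take j.1).sum) :=
        congrArg φ hij
      rw [key, key] at h1
      have hi : i.1 < l.length + 1 := by omega
      have hj : j.1 < l.length + 1 := by omega
      have h2 : (⟨i.1, hi⟩ : Fin (l.length + 1)) = ⟨j.1, hj⟩ := hL h1
      exact Fin.ext (by simpa using congrArg Fin.val h2)
    · exfalso
      rcases hR with ⟨hne, hzero, _⟩
      have hTl : l.toFinset = T := Finset.ext fun y => by
        simp [List.mem_toFinset, hlmem]
      have : l.sum = ∑ y ∈ T, y := by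
        rw [← hTl, List.sum_toFinset _ hlnd]
        simp
      exact hTne (by rw [← this, hzero])
end

section
/- Let H be a finite abelian group and λ a type. Suppose that for infinitely many primes p, every non-zero-sum subset of (ℤ_p × H) \ {0} of type λ is sequenceable. Then every non-zero-sum subset of (G × H) \ {0} of type λ is sequenceable, for every torsion-free abelian group G. -/
section Transfer

variable {M N H : Type*} [AddCommGroup M] [AddCommGroup N] [AddCommGroup H]

noncomputable def ssums (S : Finset (M × H)) : Finset M := by
  classical exact S.powerset.image fun U => (∑ x ∈ U, x).1

lemma mem_ssums {S : Finset (M × H)} {a : M} :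
    a ∈ ssums S ↔ ∃ U ⊆ S, (∑ x ∈ U, x).1 = a := by
  classical
  simp [ssums, Finset.mem_image, Finset.mem_powerset]

lemma zero_mem_ssums (S : Finset (M × H)) : (0 : M) ∈ ssums S :=
  mem_ssums.mpr ⟨∅, by simp, by simp⟩

lemma fst_mem_ssums {S : Finset (M × H)} {x : M × H} (hx : x ∈ S) : x.1 ∈ ssums S := by
  classical
  exact mem_ssums.mpr ⟨{x}, by simpa using hx, by simp⟩

lemma sum_fst_mem_ssums (S : Finset (M × H)) : (∑ x ∈ S, x).1 ∈ ssums S :=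
  mem_ssums.mpr ⟨S, subset_rfl, rfl⟩

lemma list_sum_fst_mem_ssums {S : Finset (M × H)} {l : List (M × H)}
    (hnd : l.Nodup) (hmem : ∀ x ∈ l, x ∈ S) : l.sum.1 ∈ ssums S := by
  classical
  refine mem_ssums.mpr ⟨l.toFinset, ?_, ?_⟩
  · intro x hx; exact hmem x (List.mem_toFinset.mp hx)
  · have : ∑ x ∈ l.toFinset, x = l.sum := by
      simpa using List.sum_toFinset id hnd
    rw [this]

def pmap (φ : M →+ N) : M × H →+ N × H := φ.prodMap (AddMonoidHom.id H)

@[simp] lemma pmap_apply (φ : M →+ N) (x : M × H) : pmap φ x = (φ x.1, x.2) := rfl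

variable {φ : M →+ N} {S : Finset (M × H)}

lemma ssums_eq_zero (hD : Set.InjOn φ (ssums S)) {a : M} (ha : a ∈ ssums S)
    (h : φ a = 0) : a = 0 :=
  hD ha (zero_mem_ssums S) (by simpa using h)

lemma pmap_injOn (hD : Set.InjOn φ (ssums S)) : Set.InjOn (pmap φ) (S : Set (M × H)) := by
  intro x hx y hy hxy
  simp only [pmap_apply, Prod.mk.injEq] at hxy
  exact Prod.ext (hD (fst_mem_ssums hx) (fst_mem_ssums hy) hxy.1) hxy.2

lemma take_map_sum (F : M × H →+ N × H) (l : List (M × H)) (i : ℕ) :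
    ((l.map F).take i).sum = F ((l.take i).sum) := by
  rw [← List.map_take, map_list_sum]

lemma prefix_sum_mem {l : List (M × H)} (hnd : l.Nodup) (hmem : ∀ x ∈ l, x ∈ S) (i : ℕ) :
    ((l.take i).sum).1 ∈ ssums S :=
  list_sum_fst_mem_ssums ((List.take_sublist i l).nodup hnd)
    (fun x hx => hmem x ((List.take_sublist i l).subset hx))

lemma prefix_sum_eq (hD : Set.InjOn φ (ssums S)) {l : List (M × H)}
    (hnd : l.Nodup) (hmem : ∀ x ∈ l, x ∈ S) {i j : ℕ}
    (h : pmap φ ((l.take i).sum) = pmap φ ((l.take j).sum)) :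
    (l.take i).sum = (l.take j).sum := by
  simp only [pmap_apply, Prod.mk.injEq] at h
  exact Prod.ext (hD (prefix_sum_mem hnd hmem i) (prefix_sum_mem hnd hmem j) h.1) h.2

lemma map_sum_zero (hD : Set.InjOn φ (ssums S)) {l : List (M × H)}
    (hnd : l.Nodup) (hmem : ∀ x ∈ l, x ∈ S)
    (h : (l.map (pmap φ)).sum = 0) : l.sum = 0 := by
  rw [← map_list_sum] at h
  simp only [pmap_apply, Prod.mk.injEq] at h
  rw [Prod.ext_iff] at h
  simp only at h
  exact Prod.ext (ssums_eq_zero hD (list_sum_fst_mem_ssums hnd hmem) h.1) h.2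

lemma isLinSeq_map_iff (hD : Set.InjOn φ (ssums S)) {l : List (M × H)}
    (hnd : l.Nodup) (hmem : ∀ x ∈ l, x ∈ S) :
    IsLinSeq (l.map (pmap φ)) ↔ IsLinSeq l := by
  have hlen : l.length + 1 = (l.map (pmap φ)).length + 1 := by simp
  constructor
  · intro h i j hij
    have h2 : ((l.map (pmap φ)).take i.val).sum = ((l.map (pmap φ)).take j.val).sum := by
      rw [take_map_sum, take_map_sum]
      simp only at hij
      rw [hij]
    have := h (a₁ := Fin.cast hlen i) (a₂ := Fin.cast hlen j) (by simpa using h2)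
    exact Fin.ext (by simpa using congrArg Fin.val this)
  · intro h i j hij
    simp only [take_map_sum] at hij
    have h2 := prefix_sum_eq hD hnd hmem hij
    have := h (a₁ := Fin.cast hlen.symm i) (a₂ := Fin.cast hlen.symm j) (by simpa using h2)
    exact Fin.ext (by simpa using congrArg Fin.val this)

lemma isRotSeq_map_iff (hD : Set.InjOn φ (ssums S)) {l : List (M × H)}
    (hnd : l.Nodup) (hmem : ∀ x ∈ l, x ∈ S) :
    IsRotSeq (l.map (pmap φ)) ↔ IsRotSeq l := by
  have hlen : l.length = (l.map (pmap φ)).length := by simp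
  constructor
  · rintro ⟨hne, hsum, h⟩
    refine ⟨fun hl => hne (by simp [hl]), map_sum_zero hD hnd hmem hsum, ?_⟩
    intro i j hij
    have h2 : ((l.map (pmap φ)).take i.val).sum = ((l.map (pmap φ)).take j.val).sum := by
      rw [take_map_sum, take_map_sum]
      simp only at hij
      rw [hij]
    have := h (a₁ := Fin.cast hlen i) (a₂ := Fin.cast hlen j) (by simpa using h2)
    exact Fin.ext (by simpa using congrArg Fin.val this)
  · rintro ⟨hne, hsum, h⟩
    refine ⟨by simpa using hne, by rw [← map_list_sum, hsum, map_zero], ?_⟩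
    intro i j hij
    simp only [take_map_sum] at hij
    have h2 := prefix_sum_eq hD hnd hmem hij
    have := h (a₁ := Fin.cast hlen.symm i) (a₂ := Fin.cast hlen.symm j) (by simpa using h2)
    exact Fin.ext (by simpa using congrArg Fin.val this)

theorem sequenceable_image_iff [DecidableEq (N × H)] (hD : Set.InjOn φ (ssums S)) :
    Sequenceable (S.image (pmap φ)) ↔ Sequenceable S := by
  constructor
  · rintro ⟨l', hnd', hm', hseq'⟩
    haveI : Nonempty (M × H) := ⟨((0 : M), (0 : H))⟩
    set g : N × H → M × H := Function.invFunOn (pmap φ) ↑S with hg_def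
    have hg : ∀ y ∈ l', pmap φ (g y) = y ∧ g y ∈ S := by
      intro y hy
      have : ∃ a ∈ (S : Set (M × H)), pmap φ a = y := by
        have := (hm' y).1 hy
        simp only [Finset.mem_image] at this
        obtain ⟨a, ha, rfl⟩ := this
        exact ⟨a, ha, rfl⟩
      exact ⟨Function.invFunOn_eq this, Function.invFunOn_mem this⟩
    set l := l'.map g with hl_def
    have hback : l.map (pmap φ) = l' := by
      rw [hl_def, List.map_map]
      conv_rhs => rw [← List.map_id l']
      exact List.map_congr_left (fun a ha => (hg a ha).1)
    have hnd : l.Nodup := by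
      refine hnd'.map_on ?_
      intro x hx y hy hxy
      rw [← (hg x hx).1, ← (hg y hy).1, hxy]
    have hmem : ∀ x ∈ l, x ∈ S := by
      intro x hx
      rw [hl_def, List.mem_map] at hx
      obtain ⟨y, hy, rfl⟩ := hx
      exact (hg y hy).2
    have hm : ∀ x, x ∈ l ↔ x ∈ S := by
      intro x
      refine ⟨hmem x, fun hx => ?_⟩
      have h1 : pmap φ x ∈ l' := (hm' _).2 (Finset.mem_image_of_mem _ hx)
      have h2 : g (pmap φ x) ∈ l := by
        rw [hl_def]; exact List.mem_map_of_mem h1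
      have h3 : g (pmap φ x) = x := by
        apply pmap_injOn hD (hg _ h1).2 hx
        exact (hg _ h1).1
      rwa [h3] at h2
    refine ⟨l, hnd, hm, ?_⟩
    rcases hseq' with h | h
    · left; exact (isLinSeq_map_iff hD hnd hmem).1 (by rwa [hback])
    · right; exact (isRotSeq_map_iff hD hnd hmem).1 (by rwa [hback])
  · rintro ⟨l, hnd, hm, hseq⟩
    have hmem : ∀ x ∈ l, x ∈ S := fun x hx => (hm x).1 hx
    refine ⟨l.map (pmap φ), ?_, ?_, ?_⟩
    · exact hnd.map_on (fun x hx y hy hxy => pmap_injOn hD (hmem x hx) (hmem y hy) hxy)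
    · intro x
      simp only [List.mem_map, Finset.mem_image]
      constructor
      · rintro ⟨a, ha, rfl⟩; exact ⟨a, hmem a ha, rfl⟩
      · rintro ⟨a, ha, rfl⟩; exact ⟨a, (hm a).2 ha, rfl⟩
    · rcases hseq with h | h
      · left; exact (isLinSeq_map_iff hD hnd hmem).2 h
      · right; exact (isRotSeq_map_iff hD hnd hmem).2 h

theorem sum_image_pmap [DecidableEq (N × H)] (hD : Set.InjOn φ (ssums S)) :
    ∑ x ∈ S.image (pmap φ), x = pmap φ (∑ x ∈ S, x) := by
  rw [Finset.sum_image (fun x hx y hy h => pmap_injOn hD hx hy h), map_sum]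

theorem zero_not_mem_image [DecidableEq (N × H)] (hD : Set.InjOn φ (ssums S))
    (h0 : (0 : M × H) ∉ S) : (0 : N × H) ∉ S.image (pmap φ) := by
  intro hmem
  rw [Finset.mem_image] at hmem
  obtain ⟨y, hy, hFy⟩ := hmem
  rw [Prod.ext_iff] at hFy
  simp only [pmap_apply] at hFy
  have : y = 0 := Prod.ext (ssums_eq_zero hD (fst_mem_ssums hy) hFy.1) hFy.2
  exact h0 (this ▸ hy)

theorem sum_image_ne [DecidableEq (N × H)] (hD : Set.InjOn φ (ssums S))
    (h : ∑ x ∈ S, x ≠ 0) : ∑ x ∈ S.image (pmap φ), x ≠ 0 := by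
  rw [sum_image_pmap hD]
  intro hc
  rw [Prod.ext_iff] at hc
  simp only [pmap_apply] at hc
  exact h (Prod.ext (ssums_eq_zero hD (sum_fst_mem_ssums S) hc.1) hc.2)

theorem hasType_image_ncard [DecidableEq (N × H)] (hD : Set.InjOn φ (ssums S)) (h : H) :
    ({x ∈ (↑(S.image (pmap φ)) : Set (N × H)) | x.2 = h}).ncard
      = ({x ∈ (↑S : Set (M × H)) | x.2 = h}).ncard := by
  have heq : {x ∈ (↑(S.image (pmap φ)) : Set (N × H)) | x.2 = h}
      = pmap φ '' {x ∈ (↑S : Set (M × H)) | x.2 = h} := by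
    ext x
    simp only [Set.mem_setOf_eq, Set.mem_image, Finset.coe_image, Finset.mem_coe]
    constructor
    · rintro ⟨⟨a, ha, rfl⟩, h2⟩
      exact ⟨a, ⟨ha, h2⟩, rfl⟩
    · rintro ⟨a, ⟨ha, h2⟩, rfl⟩
      exact ⟨⟨a, ha, rfl⟩, h2⟩
  rw [heq, Set.ncard_image_of_injOn ((pmap_injOn hD).mono (fun x hx => hx.1))]

end Transfer


lemma exists_hom_int (A : Type*) [AddCommGroup A] [Module.Finite ℤ A]
    [NoZeroSMulDivisors ℤ A] (E : Finset A) (hE : (0 : A) ∉ E) :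
    ∃ φ : A →+ ℤ, ∀ a ∈ E, φ a ≠ 0 := by
  haveI : Module.Free ℤ A := Module.free_of_finite_type_torsion_free'
  set ι := Module.Free.ChooseBasisIndex ℤ A
  set b := Module.Free.chooseBasis ℤ A with hb
  set e : ι ≃ Fin (Fintype.card ι) := Fintype.equivFin ι with he
  set P : A → Polynomial ℤ :=
    fun a => ∑ i : ι, Polynomial.C (b.repr a i) * Polynomial.X ^ ((e i : ℕ)) with hPdef
  have hP : ∀ a : A, a ≠ 0 → P a ≠ 0 := by
    intro a ha hc
    have hex : ∃ i, b.repr a i ≠ 0 := by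
      by_contra h
      push_neg at h
      apply ha
      have h0 : b.repr a = 0 := Finsupp.ext h
      simpa using congrArg b.repr.symm h0
    obtain ⟨i₀, hi₀⟩ := hex
    apply hi₀
    have hco := congrArg (fun p => Polynomial.coeff p ((e i₀ : ℕ))) hc
    simp only [hPdef, Polynomial.finset_sum_coeff, Polynomial.coeff_C_mul,
      Polynomial.coeff_X_pow, Polynomial.coeff_zero, mul_ite, mul_one, mul_zero] at hco
    rwa [Finset.sum_eq_single i₀ (fun i _ hne => by
        rw [if_neg]
        exact fun hx => hne (e.injective (Fin.ext hx.symm)))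
      (fun h => absurd (Finset.mem_univ i₀) h), if_pos rfl] at hco
  have hroots : ({c : ℤ | ∃ a ∈ E, (P a).eval c = 0}).Finite := by
    have heq : {c : ℤ | ∃ a ∈ E, (P a).eval c = 0} = ⋃ a ∈ E, {c | (P a).IsRoot c} := by
      ext c; simp [Polynomial.IsRoot]
    rw [heq]
    exact Set.Finite.biUnion E.finite_toSet
      (fun a ha => Polynomial.finite_setOf_isRoot (hP a (fun h0 => hE (h0 ▸ ha))))
  obtain ⟨c, hc⟩ : ∃ c : ℤ, ∀ a ∈ E, (P a).eval c ≠ 0 := by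
    obtain ⟨c, hc⟩ := (Set.Finite.infinite_compl hroots).nonempty
    exact ⟨c, fun a ha h => hc ⟨a, ha, h⟩⟩
  refine ⟨{ toFun := fun a => ∑ i : ι, (b.repr a i) * c ^ ((e i : ℕ)),
            map_zero' := by simp,
            map_add' := by intro x y; simp [add_mul, Finset.sum_add_distrib] }, ?_⟩
  intro a ha h
  apply hc a ha
  have : (P a).eval c = ∑ i : ι, (b.repr a i) * c ^ ((e i : ℕ)) := by
    simp [hPdef, Polynomial.eval_finset_sum]
  rw [this]
  exact h



/-- If for infinitely many primes p every non-zero-sum subset of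
(ℤ_p × H) minus {0} of type lam is sequenceable, then so is every
non-zero-sum subset of (G × H) minus {0} of type lam, for every torsion-free
abelian group G. -/
theorem stmt_12 (H : Type*) [AddCommGroup H] [Fintype H] (lam : H → ℕ)
    (hyp : {p : ℕ | p.Prime ∧ ∀ S : Finset (ZMod p × H),
      (0 : ZMod p × H) ∉ S → HasType S lam → (∑ x ∈ S, x) ≠ 0 →
      Sequenceable S}.Infinite) :
    ∀ (G : Type) [AddCommGroup G], (∀ g : G, g ≠ 0 → ¬IsOfFinAddOrder g) →
      ∀ S : Finset (G × H), (0 : G × H) ∉ S → HasType S lam →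
        (∑ x ∈ S, x) ≠ 0 → Sequenceable S := by
  intro G _ hTF S hS0 hT hSsum
  classical
  -- the subgroup generated by the first coordinates
  set A : AddSubgroup G := AddSubgroup.closure (Prod.fst '' (S : Set (G × H))) with hA
  have hmemA : ∀ x ∈ S, x.1 ∈ A := fun x hx => AddSubgroup.subset_closure ⟨x, hx, rfl⟩
  haveI : Module.Finite ℤ ↥A := Module.Finite.iff_addGroup_fg.mpr
    ((AddGroup.fg_iff_addSubgroup_fg A).mpr ⟨S.image Prod.fst, by rw [Finset.coe_image]⟩)
  haveI : NoZeroSMulDivisors ℤ G := by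
    constructor
    intro c x h
    by_contra hne
    push_neg at hne
    exact hTF x hne.2 (isOfFinAddOrder_iff_zsmul_eq_zero.mpr ⟨c, hne.1, h⟩)
  haveI : NoZeroSMulDivisors ℤ ↥A := by
    constructor
    intro c x h
    have h2 : c • (x : G) = 0 := by
      have := congrArg A.subtype h
      rwa [map_zsmul, map_zero] at this
    rcases smul_eq_zero.mp h2 with h1 | h1
    · left; exact h1
    · right; exact Subtype.ext h1
  -- the lift of S to A × H
  set T : Finset (↥A × H) :=
    S.attach.image (fun x => ((⟨x.1.1, hmemA x.1 x.2⟩ : ↥A), x.1.2)) with hTdef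
  have hTS : T.image (pmap A.subtype) = S := by
    rw [hTdef, Finset.image_image]
    have heq : ((pmap A.subtype) ∘ (fun x : {x // x ∈ S} =>
        ((⟨x.1.1, hmemA x.1 x.2⟩ : ↥A), x.1.2))) = fun x : {x // x ∈ S} => (x : G × H) := by
      funext x
      simp [pmap]
    rw [heq, Finset.attach_image_val]
  have hιD : Set.InjOn A.subtype ↑(ssums T) :=
    fun a _ b _ h => Subtype.ext h
  -- properties of T
  have hT0 : (0 : ↥A × H) ∉ T := by
    intro h
    have := Finset.mem_image_of_mem (pmap A.subtype) h
    rw [map_zero, hTS] at this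
    exact hS0 this
  have hTtype : HasType T lam := by
    intro hh
    have hnc := hasType_image_ncard (φ := A.subtype) (S := T) hιD hh
    rw [hTS] at hnc
    rw [← hnc]
    exact hT hh
  have hTsum : ∑ x ∈ T, x ≠ 0 := by
    intro h0
    apply hSsum
    rw [← hTS, sum_image_pmap hιD, h0, map_zero]
  -- an integer-valued homomorphism injective on the subset sums
  set D : Finset ↥A := ssums T with hD
  set E : Finset ↥A := ((D ×ˢ D).image (fun q => q.1 - q.2)).erase 0 with hEdef
  obtain ⟨φZ, hφ⟩ := exists_hom_int ↥A E (Finset.notMem_erase _ _)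
  have hφD : Set.InjOn φZ ↑D := by
    intro d1 h1 d2 h2 hEq
    by_contra hne
    refine hφ (d1 - d2) ?_ (by rw [map_sub, hEq, sub_self])
    refine Finset.mem_erase.mpr ⟨sub_ne_zero.mpr hne, Finset.mem_image.mpr
      ⟨(d1, d2), Finset.mem_product.mpr ⟨h1, h2⟩, rfl⟩⟩
  -- pick a suitable prime
  set B : ℤ := ∑ d ∈ D, |φZ d| with hBdef
  have hB : ∀ d ∈ D, |φZ d| ≤ B := by
    intro d hd
    exact Finset.single_le_sum (f := fun x => |φZ x|) (fun i _ => abs_nonneg _) hd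
  obtain ⟨p, hpmem, hplt⟩ := hyp.exists_gt (2 * B).toNat
  have hpgt : 2 * B < (p : ℤ) :=
    lt_of_le_of_lt (Int.self_le_toNat _) (by exact_mod_cast hplt)
  set Φ : ↥A →+ ZMod p := (Int.castAddHom (ZMod p)).comp φZ with hΦdef
  have hΦD : Set.InjOn Φ ↑D := by
    intro d1 h1 d2 h2 hEq
    apply hφD h1 h2
    have hdvd : (p : ℤ) ∣ (φZ d1 - φZ d2) := by
      rw [← ZMod.intCast_zmod_eq_zero_iff_dvd]
      push_cast
      rw [sub_eq_zero]
      simpa [hΦdef] using hEq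
    have habs : |φZ d1 - φZ d2| < (p : ℤ) := by
      have h3 : |φZ d1 - φZ d2| ≤ |φZ d1| + |φZ d2| := by
        calc |φZ d1 - φZ d2| = |φZ d1 + -(φZ d2)| := by rw [sub_eq_add_neg]
        _ ≤ |φZ d1| + |-(φZ d2)| := abs_add_le _ _
        _ = |φZ d1| + |φZ d2| := by rw [abs_neg]
      have h4 := hB d1 h1
      have h5 := hB d2 h2
      linarith
    have := Int.eq_zero_of_abs_lt_dvd hdvd habs
    linarith [this]
  -- apply the hypothesis at p and transfer back
  have hps := hpmem.2 (T.image (pmap Φ)) (zero_not_mem_image hΦD hT0)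
    (fun hh => by rw [hasType_image_ncard hΦD hh]; exact hTtype hh)
    (sum_image_ne hΦD hTsum)
  have hseqT : Sequenceable T := (sequenceable_image_iff hΦD).1 hps
  have hfin : Sequenceable (T.image (pmap A.subtype)) :=
    (sequenceable_image_iff hιD).2 hseqT
  rwa [hTS] at hfin
end

section
/- Let H be a finite abelian group and λ a type with k = λ_0 + ... + λ_{t−1}. Suppose that for infinitely many primes p, every non-zero-sum subset of (ℤ_p × H) \ {0} of type λ is sequenceable. Then there exists a positive integer N(λ) such that every non-zero-sum subset of (G × H) \ {0} of type λ is sequenceable, for every abelian group G with θ(G) > N(λ), where θ(G) = min{o(g) : g ∈ G, g ≠ 0} is the minimum order of a nonzero element. -/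
open Classical in
/-- Vectors with entries in {-1,0,1}. -/
noncomputable def Bset (k : ℕ) : Finset (Fin k → ℤ) :=
  Fintype.piFinset (fun _ => ({-1,0,1} : Finset ℤ))

open Classical in
noncomputable def Nbound (k : ℕ) : ℕ :=
  1 + ((Bset k).powerset ×ˢ (Bset k)).sup (fun Vc =>
    sInf {m : ℕ | 0 < m ∧ (m : ℤ) • Vc.2 ∈ Submodule.span ℤ ((Vc.1 : Finset (Fin k → ℤ)) : Set (Fin k → ℤ))})


lemma exists_functional {M : Type*} [AddCommGroup M] [Module ℤ M] [Module.Free ℤ M]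
    (F : Finset M) (hF : ∀ x ∈ F, x ≠ 0) :
    ∃ χ : M →ₗ[ℤ] ℤ, ∀ x ∈ F, χ x ≠ 0 := by
  classical
  induction F using Finset.induction_on with
  | empty => exact ⟨0, by simp⟩
  | @insert v F hv ih =>
    obtain ⟨χ, hχ⟩ := ih (fun x hx => hF x (Finset.mem_insert_of_mem hx))
    have hv0 : v ≠ 0 := hF v (Finset.mem_insert_self v F)
    set b := Module.Free.chooseBasis ℤ M with hb
    have : b.repr v ≠ 0 := by simpa using hv0
    obtain ⟨i, hi⟩ : ∃ i, b.repr v i ≠ 0 := by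
      by_contra h
      push_neg at h
      exact this (Finsupp.ext h)
    set γ : M →ₗ[ℤ] ℤ := b.coord i with hγ
    have hγv : γ v ≠ 0 := hi
    set n : ℕ := 1 + (insert v F).sup (fun x => (χ x).natAbs) with hn
    refine ⟨(n : ℤ) • γ + χ, ?_⟩
    have key : ∀ x ∈ insert v F, γ x ≠ 0 → (n : ℤ) * γ x + χ x ≠ 0 := by
      intro x hx hgx heq
      have h1 : (χ x).natAbs < n := by
        have h0 : (χ x).natAbs ≤ (insert v F).sup (fun x => (χ x).natAbs) := by simpa using Finset.le_sup (f := fun x => (χ x).natAbs) hx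
        omega
      have h2 : |χ x| = (n : ℤ) * |γ x| := by
        have : χ x = -((n:ℤ) * γ x) := by linarith
        rw [this, abs_neg, abs_mul, abs_of_nonneg (by positivity : (0:ℤ) ≤ (n:ℤ))]
      have h3 : (1:ℤ) ≤ |γ x| := Int.one_le_abs hgx
      have h4 : (n:ℤ) ≤ |χ x| := by nlinarith
      have h5 : |χ x| < (n:ℤ) := by
        rw [Int.abs_eq_natAbs]; exact_mod_cast h1
      linarith
    intro x hx
    simp only [LinearMap.add_apply, LinearMap.smul_apply, smul_eq_mul]
    rcases Finset.mem_insert.mp hx with rfl | hxF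
    · exact key x hx hγv
    · by_cases hgx : γ x = 0
      · simpa [hgx] using hχ x hxF
      · exact key x hx hgx

lemma exists_good_b {k : ℕ} (P : Set ℕ) (hP : P.Infinite) {G : Type} [AddCommGroup G]
    (hG : ∀ g : G, g ≠ 0 → addOrderOf g = 0 ∨ Nbound k < addOrderOf g)
    (avec : Fin k → G) :
    ∃ p : ℕ, p ∈ P ∧ 0 < p ∧ ∃ b : Fin k → ZMod p,
      ∀ c ∈ Bset k, ((∑ i, c i • avec i = 0) ↔ (∑ i, c i • b i = 0)) := by
  classical
  -- the linear map of relations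
  set L : (Fin k → ℤ) →ₗ[ℤ] G :=
    { toFun := fun c => ∑ i, c i • avec i
      map_add' := by intro x y; simp [add_smul, Finset.sum_add_distrib]
      map_smul' := by intro m x; simp [mul_smul, Finset.smul_sum] } with hL
  set V : Finset (Fin k → ℤ) := (Bset k).filter (fun c => L c = 0) with hV
  set Λ₀ : Submodule ℤ (Fin k → ℤ) := Submodule.span ℤ (V : Set (Fin k → ℤ)) with hΛ₀
  have hker : Λ₀ ≤ LinearMap.ker L := by
    rw [hΛ₀, Submodule.span_le]
    intro v hv
    simp only [Finset.coe_filter, Set.mem_setOf_eq, hV] at hv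
    exact hv.2
  set C : Finset (Fin k → ℤ) := (Bset k).filter (fun c => L c ≠ 0) with hC
  -- Step A: no element of C is torsion mod Λ₀
  have hA : ∀ c ∈ C, ∀ m : ℕ, 0 < m → ¬ ((m : ℤ) • c ∈ Λ₀) := by
    intro c hc m hm hmem
    set Mset := {m : ℕ | 0 < m ∧ (m : ℤ) • c ∈ Λ₀} with hMset
    have hne : Mset.Nonempty := ⟨m, hm, hmem⟩
    have hmem0 := Nat.sInf_mem hne
    set m₀ := sInf Mset with hm₀
    have hcB : c ∈ Bset k := (Finset.mem_filter.mp hc).1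
    have hLc : L c ≠ 0 := (Finset.mem_filter.mp hc).2
    have hVB : V ∈ (Bset k).powerset := Finset.mem_powerset.mpr (Finset.filter_subset _ _)
    have hle : m₀ ≤ ((Bset k).powerset ×ˢ (Bset k)).sup (fun Vc =>
        sInf {m : ℕ | 0 < m ∧ (m : ℤ) • Vc.2 ∈ Submodule.span ℤ ((Vc.1 : Finset (Fin k → ℤ)) : Set (Fin k → ℤ))}) := by
      have hmemP : (V, c) ∈ (Bset k).powerset ×ˢ (Bset k) :=
        Finset.mem_product.mpr ⟨hVB, hcB⟩
      rw [hm₀, hMset, hΛ₀]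
      simpa using Finset.le_sup (f := fun Vc =>
        sInf {m : ℕ | 0 < m ∧ (m : ℤ) • Vc.2 ∈ Submodule.span ℤ ((Vc.1 : Finset (Fin k → ℤ)) : Set (Fin k → ℤ))}) hmemP
    have hlt : m₀ < Nbound k := by
      unfold Nbound
      omega
    have hL0 : m₀ • L c = 0 := by
      have := hker hmem0.2
      rw [LinearMap.mem_ker, map_smul] at this
      rw [← natCast_zsmul]
      exact this
    have hm₀pos : 0 < m₀ := hmem0.1
    have hdvd : addOrderOf (L c) ∣ m₀ := addOrderOf_dvd_of_nsmul_eq_zero hL0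
    rcases hG (L c) hLc with h0 | hgt
    · rw [h0] at hdvd
      omega
    · have := Nat.le_of_dvd hmem0.1 hdvd
      omega
  -- quotient by Λ₀ then by torsion
  set Q := (Fin k → ℤ) ⧸ Λ₀ with hQ
  set Qt := Q ⧸ Submodule.torsion ℤ Q with hQt
  set π : (Fin k → ℤ) →ₗ[ℤ] Qt :=
    (Submodule.torsion ℤ Q).mkQ.comp Λ₀.mkQ with hπ
  have hπV : ∀ v ∈ V, π v = 0 := by
    intro v hv
    have : Λ₀.mkQ v = 0 := by
      rw [Submodule.mkQ_apply, Submodule.Quotient.mk_eq_zero]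
      exact Submodule.subset_span hv
    simp [hπ, this]
  have hπC : ∀ c ∈ C, π c ≠ 0 := by
    intro c hc h0
    rw [hπ, LinearMap.comp_apply, Submodule.mkQ_apply, Submodule.Quotient.mk_eq_zero] at h0
    obtain ⟨⟨n, hn⟩, hnq⟩ := h0
    -- n : nonZeroDivisors ℤ, n • (mk c) = 0
    have hnz : (n : ℤ) ≠ 0 := nonZeroDivisors.ne_zero hn
    have : Λ₀.mkQ ((n : ℤ) • c) = 0 := by
      rw [map_smul]; exact_mod_cast hnq
    rw [Submodule.mkQ_apply, Submodule.Quotient.mk_eq_zero] at this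
    rcases lt_or_gt_of_ne hnz with hneg | hpos
    · have : ((-n).toNat : ℤ) • c ∈ Λ₀ := by
        have h2 : (-n) • c ∈ Λ₀ := by
          rw [neg_smul]; exact Λ₀.neg_mem this
        rwa [Int.toNat_of_nonneg (by omega)]
      exact hA c hc (-n).toNat (by omega) this
    · have : ((n).toNat : ℤ) • c ∈ Λ₀ := by
        rwa [Int.toNat_of_nonneg (by omega)]
      exact hA c hc n.toNat (by omega) this
  -- functional on Qt
  have : Module.Finite ℤ Qt := by
    infer_instance
  have : Module.Free ℤ Qt := by
    infer_instance
  obtain ⟨χ, hχ⟩ := exists_functional (C.image (fun c => π c)) (by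
    intro x hx
    obtain ⟨c, hc, rfl⟩ := Finset.mem_image.mp hx
    exact hπC c hc)
  set ψ : (Fin k → ℤ) →ₗ[ℤ] ℤ := χ.comp π with hψ
  have hψV : ∀ v ∈ V, ψ v = 0 := by
    intro v hv; simp [hψ, hπV v hv]
  have hψC : ∀ c ∈ C, ψ c ≠ 0 := by
    intro c hc
    exact hχ _ (Finset.mem_image_of_mem _ hc)
  -- choose a large prime
  obtain ⟨p, hpP, hplt⟩ := hP.exists_gt (C.sup (fun c => (ψ c).natAbs))
  have hp0 : 0 < p := lt_of_le_of_lt (Nat.zero_le _) hplt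
  haveI : NeZero p := ⟨by omega⟩
  refine ⟨p, hpP, hp0, fun i => ((ψ (Pi.single i 1) : ℤ) : ZMod p), ?_⟩
  have hcast : ∀ c : Fin k → ℤ, (∑ i, c i • (((ψ (Pi.single i 1) : ℤ) : ZMod p))) = ((ψ c : ℤ) : ZMod p) := by
    intro c
    have hrepr : c = ∑ i, c i • Pi.single i 1 := by
      ext j
      simp [Pi.single_apply]
    conv_rhs => rw [hrepr]
    rw [map_sum, Int.cast_sum]
    apply Finset.sum_congr rfl
    intro i _
    rw [map_smul, smul_eq_mul, Int.cast_mul, zsmul_eq_mul]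
  intro c hcB
  by_cases hLc : L c = 0
  · have hcV : c ∈ V := Finset.mem_filter.mpr ⟨hcB, hLc⟩
    constructor
    · intro _
      rw [hcast c, hψV c hcV]
      simp
    · intro _
      exact hLc
  · have hcC : c ∈ C := Finset.mem_filter.mpr ⟨hcB, hLc⟩
    constructor
    · intro h; exact absurd h hLc
    · intro h
      exfalso
      rw [hcast c] at h
      rw [ZMod.intCast_zmod_eq_zero_iff_dvd] at h
      have hdvd : p ∣ (ψ c).natAbs := by
        have := Int.natAbs_dvd_natAbs.mpr h
        simpa using this
      have hpos : 0 < (ψ c).natAbs := Int.natAbs_pos.mpr (hψC c hcC)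
      have h1 : p ≤ (ψ c).natAbs := Nat.le_of_dvd hpos hdvd
      have h2 : (ψ c).natAbs ≤ C.sup (fun c => (ψ c).natAbs) := by
        simpa using Finset.le_sup (f := fun c => (ψ c).natAbs) hcC
      omega

lemma indicator_mem_Bset {k : ℕ} (T U : Finset (Fin k)) :
    (fun m => (if m ∈ T then (1:ℤ) else 0) - (if m ∈ U then (1:ℤ) else 0)) ∈ Bset k := by
  rw [Bset, Fintype.mem_piFinset]
  intro m
  split_ifs <;> simp

lemma sum_indicator_smul {k : ℕ} {A : Type*} [AddCommGroup A] (T U : Finset (Fin k))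
    (x : Fin k → A) :
    ∑ m, ((if m ∈ T then (1:ℤ) else 0) - (if m ∈ U then (1:ℤ) else 0)) • x m
      = ∑ m ∈ T, x m - ∑ m ∈ U, x m := by
  have h : ∀ W : Finset (Fin k), ∑ m, (if m ∈ W then (1:ℤ) else 0) • x m = ∑ m ∈ W, x m := by
    intro W
    rw [show (∑ m, (if m ∈ W then (1:ℤ) else 0) • x m) = ∑ m, (if m ∈ W then x m else 0) from
      Finset.sum_congr rfl (fun m _ => by split_ifs <;> simp)]
    rw [Finset.sum_ite_mem, Finset.univ_inter]
  simp only [sub_smul, Finset.sum_sub_distrib, h]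



/-- If for infinitely many primes p every non-zero-sum subset of
(ℤ_p × H) minus {0} of type lam is sequenceable, then there is N such that the
same holds in G × H for every abelian group G all of whose nonzero elements
have order (possibly infinite) exceeding N. -/
theorem stmt_13 (H : Type*) [AddCommGroup H] [Fintype H] (lam : H → ℕ)
    (hyp : {p : ℕ | p.Prime ∧ ∀ S : Finset (ZMod p × H),
      (0 : ZMod p × H) ∉ S → HasType S lam → (∑ x ∈ S, x) ≠ 0 →
      Sequenceable S}.Infinite) :
    ∃ N : ℕ, 0 < N ∧ ∀ (G : Type) [AddCommGroup G],
      (∀ g : G, g ≠ 0 → addOrderOf g = 0 ∨ N < addOrderOf g) →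
      ∀ S : Finset (G × H), (0 : G × H) ∉ S → HasType S lam →
        (∑ x ∈ S, x) ≠ 0 → Sequenceable S := by
  classical
  set k := ∑ h : H, lam h with hk
  refine ⟨Nbound k, by unfold Nbound; omega, ?_⟩
  intro G _ hG S hS0 htype hsum
  -- cardinality of fibers and of S
  have hfib : ∀ h : H, (S.filter (fun x => x.2 = h)).card = lam h := by
    intro h
    have h1 := htype h
    have h2 : {x ∈ (S : Set (G × H)) | x.2 = h} = ↑(S.filter (fun x => x.2 = h)) := by
      ext x; simp
    rw [h2, Set.ncard_coe_finset] at h1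
    exact h1
  have hcard : S.card = k := by
    rw [hk, Finset.card_eq_sum_card_fiberwise (f := Prod.snd) (t := Finset.univ)
      (fun x _ => Finset.mem_univ _)]
    exact Finset.sum_congr rfl (fun h _ => hfib h)
  -- enumeration of S
  have hcard' : Fintype.card {x // x ∈ S} = k := by
    rw [Fintype.card_coe, hcard]
  set e := Fintype.equivFinOfCardEq hcard' with he
  set a : Fin k → G × H := fun i => ((e.symm i : {x // x ∈ S}) : G × H) with ha
  have ha_inj : Function.Injective a := by
    intro i j hij
    have := e.symm.injective (Subtype.ext hij)
    exact this
  have ha_memS : ∀ i, a i ∈ S := fun i => (e.symm i).2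
  have hSimage : S = Finset.univ.image a := by
    ext x
    simp only [Finset.mem_image, Finset.mem_univ, true_and]
    constructor
    · intro hx; exact ⟨e ⟨x, hx⟩, by simp [ha]⟩
    · rintro ⟨i, rfl⟩; exact ha_memS i
  -- apply the algebraic lemma
  obtain ⟨p, hpP, hp0, b, hbiff⟩ := exists_good_b _ hyp hG (fun i => (a i).1)
  obtain ⟨hpprime, hpseq⟩ := hpP
  set f : Fin k → ZMod p × H := fun i => (b i, (a i).2) with hf
  -- the master transfer principle
  have key : ∀ T U : Finset (Fin k),
      ((∑ i ∈ T, a i = ∑ i ∈ U, a i) ↔ (∑ i ∈ T, f i = ∑ i ∈ U, f i)) := by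
    intro T U
    have h1 := hbiff _ (indicator_mem_Bset T U)
    beta_reduce at h1
    rw [sum_indicator_smul T U (fun i => (a i).1), sum_indicator_smul T U b,
      sub_eq_zero, sub_eq_zero] at h1
    have hfst : ∀ W : Finset (Fin k), (∑ i ∈ W, f i).1 = ∑ i ∈ W, b i := by
      intro W; rw [Prod.fst_sum]
    have hsnd : ∀ W : Finset (Fin k), (∑ i ∈ W, f i).2 = ∑ i ∈ W, (a i).2 := by
      intro W; rw [Prod.snd_sum]
    have hafst : ∀ W : Finset (Fin k), (∑ i ∈ W, a i).1 = ∑ i ∈ W, (a i).1 := by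
      intro W; rw [Prod.fst_sum]
    have hasnd : ∀ W : Finset (Fin k), (∑ i ∈ W, a i).2 = ∑ i ∈ W, (a i).2 := by
      intro W; rw [Prod.snd_sum]
    rw [Prod.ext_iff, Prod.ext_iff, hfst, hfst, hsnd, hsnd, hafst, hafst, hasnd, hasnd, h1]
  -- consequences of key
  have inj_f : Function.Injective f := by
    intro i j hij
    apply ha_inj
    have h1 : ∑ m ∈ {i}, f m = ∑ m ∈ {j}, f m := by simpa using hij
    simpa using (key {i} {j}).mpr h1
  set S' : Finset (ZMod p × H) := Finset.univ.image f with hS'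
  have hS'0 : (0 : ZMod p × H) ∉ S' := by
    intro h0
    obtain ⟨i, _, hi⟩ := Finset.mem_image.mp h0
    have h1 : ∑ m ∈ {i}, f m = ∑ m ∈ (∅ : Finset (Fin k)), f m := by simpa using hi
    have h2 : a i = 0 := by simpa using (key {i} ∅).mpr h1
    exact hS0 (h2 ▸ ha_memS i)
  have hsum_a : ∑ x ∈ S, x = ∑ i, a i := by
    rw [hSimage, Finset.sum_image (fun i _ j _ h => ha_inj h)]
  have hsum_f : ∑ x ∈ S', x = ∑ i, f i := by
    rw [hS', Finset.sum_image (fun i _ j _ h => inj_f h)]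
  have hsum' : ∑ x ∈ S', x ≠ 0 := by
    rw [hsum_f]
    intro h0
    apply hsum
    rw [hsum_a]
    have h1 : ∑ m ∈ Finset.univ, f m = ∑ m ∈ (∅ : Finset (Fin k)), f m := by simpa using h0
    simpa using (key Finset.univ ∅).mpr h1
  have htype' : HasType S' lam := by
    intro h
    have h2 : {x ∈ (S' : Set (ZMod p × H)) | x.2 = h} = ↑(S'.filter (fun x => x.2 = h)) := by
      ext x; simp
    rw [h2, Set.ncard_coe_finset, hS', Finset.filter_image,
      Finset.card_image_of_injective _ inj_f]
    rw [← hfib h, hSimage, Finset.filter_image, Finset.card_image_of_injective _ ha_inj]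
  obtain ⟨l', hl'nodup, hl'mem, hl'seq⟩ := hpseq S' hS'0 htype' hsum'
  -- translate the sequencing back
  have hl'toFinset : l'.toFinset = S' := by
    ext x; rw [List.mem_toFinset, hl'mem]
  have hl'sum : l'.sum = ∑ x ∈ S', x := by
    rw [← hl'toFinset, List.sum_toFinset _ hl'nodup]
    simp
  -- rule out the rotational case
  have hlin' : IsLinSeq l' := by
    rcases hl'seq with h | h
    · exact h
    · exact absurd (hl'sum ▸ h.2.1) hsum'
  haveI : Nonempty (Fin k) := by
    rcases Nat.eq_zero_or_pos k with h | h
    · exfalso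
      apply hsum
      have : S = ∅ := Finset.card_eq_zero.mp (by rw [hcard, h])
      simp [this]
    · exact ⟨⟨0, h⟩⟩
  set J : List (Fin k) := l'.map (Function.invFun f) with hJ
  have hinvf : ∀ i : Fin k, Function.invFun f (f i) = i :=
    Function.leftInverse_invFun inj_f
  have hmeml' : ∀ y ∈ l', ∃ i, f i = y := by
    intro y hy
    obtain ⟨i, _, hi⟩ := Finset.mem_image.mp ((hl'mem y).mp hy)
    exact ⟨i, hi⟩
  have hJf : J.map f = l' := by
    rw [hJ, List.map_map]
    conv_rhs => rw [← List.map_id l']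
    apply List.map_congr_left
    intro y hy
    obtain ⟨i, rfl⟩ := hmeml' y hy
    simp [hinvf i]
  have hJnodup : J.Nodup := by
    apply hl'nodup.map_on
    intro x hx y hy hxy
    obtain ⟨i, rfl⟩ := hmeml' x hx
    obtain ⟨j, rfl⟩ := hmeml' y hy
    rw [hinvf, hinvf] at hxy
    rw [hxy]
  set l : List (G × H) := J.map a with hl
  have hlnodup : l.Nodup := hJnodup.map ha_inj
  have hJall : ∀ i : Fin k, i ∈ J := by
    intro i
    have : f i ∈ l' := (hl'mem (f i)).mpr (Finset.mem_image_of_mem f (Finset.mem_univ i))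
    have := List.mem_map_of_mem (f := Function.invFun f) this
    rwa [hinvf] at this
  have hlmem : ∀ x, x ∈ l ↔ x ∈ S := by
    intro x
    rw [hl, List.mem_map]
    constructor
    · rintro ⟨i, _, rfl⟩; exact ha_memS i
    · intro hx
      rw [hSimage] at hx
      obtain ⟨i, _, rfl⟩ := Finset.mem_image.mp hx
      exact ⟨i, hJall i, rfl⟩
  have hlen : l.length = l'.length := by
    rw [hl, ← hJf]
    simp
  -- prefix sums
  have htake : ∀ n : ℕ, (J.take n).Nodup := fun n => hJnodup.sublist (List.take_sublist n J)
  have hpre_l : ∀ n : ℕ, (l.take n).sum = ∑ m ∈ (J.take n).toFinset, a m := by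
    intro n
    rw [hl, ← List.map_take, ← List.sum_toFinset _ (htake n)]
  have hpre_l' : ∀ n : ℕ, (l'.take n).sum = ∑ m ∈ (J.take n).toFinset, f m := by
    intro n
    rw [← hJf, ← List.map_take, ← List.sum_toFinset _ (htake n)]
  refine ⟨l, hlnodup, hlmem, Or.inl ?_⟩
  intro i j hij
  beta_reduce at hij
  rw [hpre_l, hpre_l] at hij
  have h1 := (key _ _).mp hij
  rw [← hpre_l', ← hpre_l'] at h1
  have h2 : (Fin.cast (by rw [hlen]) i : Fin (l'.length + 1)) =
      (Fin.cast (by rw [hlen]) j : Fin (l'.length + 1)) := hlin' h1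
  ext
  simpa using congrArg Fin.val h2
end
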